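/- arXiv:math/0309325 — 3 statements merged into one kernel-verified Lean document; each statement's English description precedes it below -/
import Mathlib

section
/- Fix i in Z/3. Every i-balanced word w on the seven letters a_i, b_i, c_i, d_i, x_i, b_{i-1}, d_{i-1} is ~-equivalent to a star decomposable word w' on the same seven letters with the same depth, d(w') = d(w). -/
/-- The 15-letter alphabet A = {a_i, b_i, c_i, d_i, x_i : i ∈ ℤ/3}. -/
inductive Letter : Type
  | a : ZMod 3 → Letter
  | b : ZMod 3 → Letter
  | c : ZMod 3 → Letter
  | d : ZMod 3 → Letter
  | x : ZMod 3 → Letter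
  deriving DecidableEq

/-- Words: the free monoid on the alphabet A. -/
abbrev Word := FreeMonoid Letter

def a (i : ZMod 3) : Word := FreeMonoid.of (Letter.a i)
def b (i : ZMod 3) : Word := FreeMonoid.of (Letter.b i)
def c (i : ZMod 3) : Word := FreeMonoid.of (Letter.c i)
def d (i : ZMod 3) : Word := FreeMonoid.of (Letter.d i)
def x (i : ZMod 3) : Word := FreeMonoid.of (Letter.x i)

/-- t_i = b_{i+1} d_{i-1} d_{i+1} b_{i-1}. -/
def t (i : ZMod 3) : Word := b (i+1) * d (i-1) * d (i+1) * b (i-1)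

/-- t'_i = d_{i-1} b_{i+1} b_{i-1} d_{i+1}. -/
def t' (i : ZMod 3) : Word := d (i-1) * b (i+1) * b (i-1) * d (i+1)

/-- The defining relations (1)-(10) of the semigroup SK. -/
inductive SKRel : Word → Word → Prop
  | r1a (i : ZMod 3) : SKRel (a i) (a (i+1) * d (i-1))
  | r1b (i : ZMod 3) : SKRel (b i) (a (i-1) * c (i+1))
  | r1c (i : ZMod 3) : SKRel (c i) (b (i-1) * c (i+1))
  | r1d (i : ZMod 3) : SKRel (d i) (a (i+1) * c (i-1))
  | r2 (i : ZMod 3) : SKRel (x i) (d (i+1) * x (i-1) * b (i+1))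
  | r3 : SKRel (d 0 * d 1 * d 2) 1
  | r4bd (i : ZMod 3) : SKRel (b i * d i) 1
  | r4db (i : ZMod 3) : SKRel (d i * b i) 1
  | r5d (i : ZMod 3) : SKRel (d i * x i * d i) (a i * (d i * x i * d i) * c i)
  | r5b (i : ZMod 3) : SKRel (b i * x i * b i) (a i * (b i * x i * b i) * c i)
  | r6 (i : ZMod 3) :
      SKRel (x i * (d (i+1) * d i * d (i-1))) ((d (i+1) * d i * d (i-1)) * x i)
  | r7 (i : ZMod 3) (w : Word)
      (hw : w ∈ ({c (i+1), x (i+1), b i * d (i+1) * d i} : Set Word)) :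
      SKRel ((d i * c i) * w) (w * (d i * c i))
  | r8 (i : ZMod 3) (w : Word)
      (hw : w ∈ ({a (i+1), b (i+1), c (i+1), x (i+1), b i * d (i+1) * d i} : Set Word)) :
      SKRel ((a i * b i) * w) (w * (a i * b i))
  | r9 (i : ZMod 3) (w : Word)
      (hw : w ∈ ({a i, b i, c i, x i, b (i-1) * d i * d (i-1)} : Set Word)) :
      SKRel (t i * w) (w * t i)
  | r10 (i : ZMod 3) (w : Word)
      (hw : w ∈ ({a (i+1), b (i+1), c (i+1), x (i+1), b i * d (i+1) * d i} : Set Word)) :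
      SKRel ((d i * x i * b i) * w) (w * (d i * x i * b i))

/-- The congruence generated by relations (1)-(10); `skCon u v` means u ~ v,
i.e. u and v have equal images in the presented monoid SK. -/
def skCon : Con Word := conGen SKRel

/-- The bracket coding for i-balancedness: a_i,b_i,c_i,d_i,x_i ↦ empty;
a_{i±1}, b_{i-1}, d_{i+1} ↦ '(' (= 1); b_{i+1}, c_{i±1}, d_{i-1} ↦ ')' (= -1);
x_{i±1} ↦ ')(' (= [-1, 1]). -/

def code (i : ZMod 3) : Letter → List ℤ
  | .a j => if j = i then [] else [1]
  | .b j => if j = i then [] else if j = i - 1 then [1] else [-1]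
  | .c j => if j = i then [] else [-1]
  | .d j => if j = i then [] else if j = i + 1 then [1] else [-1]
  | .x j => if j = i then [] else [-1, 1]

/-- The bracket sequence of a word under the i-balancedness coding. -/
def brackets (i : ZMod 3) (w : Word) : List ℤ :=
  ((FreeMonoid.toList w).map (code i)).flatten

/-- A word is i-balanced if its bracket sequence is completely balanced:
every prefix has at least as many '(' as ')', and totals agree. -/
def IBalanced (i : ZMod 3) (w : Word) : Prop :=
  (∀ p : List ℤ, p <+: brackets i w → 0 ≤ p.sum) ∧ (brackets i w).sum = 0

/-- The encoding μ for words on the seven letters a_i, b_i, c_i, d_i, x_i, b_{i-1}, d_{i-1}: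
a_i, b_i, c_i, d_i, x_i ↦ '•' (= 0), b_{i-1} ↦ '(' (= 1), d_{i-1} ↦ ')' (= -1). -/
def mu (i : ZMod 3) : Letter → List ℤ
  | .b j => if j = i - 1 then [1] else [0]
  | .d j => if j = i - 1 then [-1] else [0]
  | _ => [0]

def muList (i : ZMod 3) (w : Word) : List ℤ :=
  ((FreeMonoid.toList w).map (mu i)).flatten

/-- The star of depth k: k left brackets, a bullet, k right brackets. -/
def star (k : ℕ) : List ℤ := List.replicate k 1 ++ [0] ++ List.replicate k (-1)

/-- A word is star decomposable if its encoding is a concatenation of stars. -/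
def StarDecomposable (i : ZMod 3) (w : Word) : Prop :=
  ∃ ks : List ℕ, muList i w = (ks.map star).flatten

/-- The depth of a word: the maximal bracket difference over all prefixes of μ(w). -/
def depth (i : ZMod 3) (w : Word) : ℤ :=
  ((muList i w).inits.map List.sum).foldr max 0

/-- The word uses only the seven letters a_i, b_i, c_i, d_i, x_i, b_{i-1}, d_{i-1}. -/
def OnSeven (i : ZMod 3) (w : Word) : Prop :=
  ∀ l ∈ FreeMonoid.toList w,
    l ∈ ({Letter.a i, Letter.b i, Letter.c i, Letter.d i, Letter.x i,
          Letter.b (i-1), Letter.d (i-1)} : Set Letter)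


namespace Claim3Aux

/-! ### ZMod 3 facts -/

lemma zne1 (i : ZMod 3) : i - 1 ≠ i := fun h => absurd (sub_eq_self.mp h) (by decide)

lemma zne2 (i : ZMod 3) : i - 1 ≠ i + 1 := by
  intro h; rw [sub_eq_iff_eq_add, add_assoc] at h
  exact absurd (left_eq_add.mp h) (by decide)

/-! ### The single-integer letter weight -/

def mval (i : ZMod 3) (l : Letter) : ℤ :=
  if l = Letter.b (i-1) then 1 else if l = Letter.d (i-1) then -1 else 0

lemma mu_eq (i : ZMod 3) (l : Letter) : mu i l = [mval i l] := by
  cases l with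
  | a j => simp [mu, mval]
  | b j => by_cases h : j = i - 1 <;> simp [mu, mval, h]
  | c j => simp [mu, mval]
  | d j => by_cases h : j = i - 1 <;> simp [mu, mval, h]
  | x j => simp [mu, mval]

lemma muList_eq (i : ZMod 3) (w : Word) :
    muList i w = (FreeMonoid.toList w).map (mval i) := by
  show ((FreeMonoid.toList w).map (mu i)).flatten = _
  induction (FreeMonoid.toList w) with
  | nil => simp
  | cons l L ih => simp [mu_eq, ih]

lemma mval_b (i : ZMod 3) : mval i (Letter.b (i-1)) = 1 := by simp [mval]
lemma mval_d (i : ZMod 3) : mval i (Letter.d (i-1)) = -1 := by simp [mval]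
lemma mval_bi (i : ZMod 3) : mval i (Letter.b i) = 0 := by
  simp [mval, (zne1 i).symm]
lemma mval_di (i : ZMod 3) : mval i (Letter.d i) = 0 := by
  simp [mval, (zne1 i).symm]

def Sm (i : ZMod 3) (L : List Letter) : ℤ := (L.map (mval i)).sum

@[simp] lemma Sm_nil (i : ZMod 3) : Sm i [] = 0 := rfl
@[simp] lemma Sm_cons (i : ZMod 3) (l : Letter) (L : List Letter) :
    Sm i (l :: L) = mval i l + Sm i L := by simp [Sm]

/-! ### Peaks -/

def peak : List ℤ → ℤ
  | [] => 0
  | a :: s => max 0 (a + peak s)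

@[simp] lemma peak_nil : peak [] = 0 := rfl
@[simp] lemma peak_cons (a : ℤ) (s : List ℤ) : peak (a :: s) = max 0 (a + peak s) := rfl

lemma peak_nonneg (s : List ℤ) : 0 ≤ peak s := by
  cases s <;> simp [peak]

lemma sum_le_peak (s : List ℤ) : s.sum ≤ peak s := by
  induction s with
  | nil => simp
  | cons a s ih => simp only [peak_cons, List.sum_cons]; omega

lemma foldr_max_map_add (l : List ℤ) (a b : ℤ) :
    List.foldr max (a + b) (l.map (a + ·)) = a + List.foldr max b l := by
  induction l with
  | nil => simp
  | cons c t ih => simp only [List.map_cons, List.foldr_cons, ih]; omega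

lemma foldr_max_inits (s : List ℤ) : ∀ c : ℤ,
    List.foldr max c ((s.inits).map List.sum) = max c (peak s) := by
  induction s with
  | nil => intro c; simp; omega
  | cons a s ih =>
    intro c
    have h1 : (a :: s).inits = [] :: (s.inits).map (a :: ·) := by simp
    have h2 : ((s.inits).map (a :: ·)).map List.sum
        = ((s.inits).map List.sum).map (a + ·) := by
      rw [List.map_map, List.map_map]; rfl
    have h3 : c = a + (c - a) := by ring
    rw [h1, List.map_cons, h2, List.foldr_cons, h3, foldr_max_map_add, ih (c - a)]
    simp only [List.sum_nil, peak_cons]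
    omega

lemma depth_eq_peak (i : ZMod 3) (w : Word) : depth i w = peak (muList i w) := by
  show List.foldr max 0 (((muList i w).inits).map List.sum) = _
  rw [foldr_max_inits]
  have := peak_nonneg (muList i w); omega

lemma depth_nonneg (i : ZMod 3) (w : Word) : 0 ≤ depth i w := by
  rw [depth_eq_peak]; exact peak_nonneg _

lemma peak_append (s t : List ℤ) : peak (s ++ t) = max (peak s) (s.sum + peak t) := by
  induction s with
  | nil => have := peak_nonneg t; simp; omega
  | cons a s ih => simp only [List.cons_append, peak_cons, ih, List.sum_cons]; omega

lemma sum_star (k : ℕ) : (_root_.star k).sum = 0 := by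
  simp [_root_.star, List.sum_replicate]

lemma peak_replicate_one (k : ℕ) : peak (List.replicate k (1 : ℤ)) = k := by
  induction k with
  | zero => simp
  | succ n ih => simp only [List.replicate_succ, peak_cons, ih]; omega

lemma peak_replicate_negone (k : ℕ) : peak (List.replicate k (-1 : ℤ)) = 0 := by
  induction k with
  | zero => simp
  | succ n ih => simp only [List.replicate_succ, peak_cons, ih]; omega

lemma peak_star (k : ℕ) : peak (_root_.star k) = k := by
  have h : _root_.star k = List.replicate k (1:ℤ) ++ ((0:ℤ) :: List.replicate k (-1:ℤ)) := by
    simp [_root_.star]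
  rw [h, peak_append, peak_replicate_one]
  simp only [List.sum_replicate, peak_cons, peak_replicate_negone, nsmul_eq_mul, mul_one]
  omega

lemma peak_stars : ∀ ks : List ℕ,
    peak ((ks.map _root_.star).flatten)
      = List.foldr max 0 (ks.map (Nat.cast : ℕ → ℤ)) := by
  intro ks
  induction ks with
  | nil => simp
  | cons k ks ih =>
    simp only [List.map_cons, List.flatten_cons, peak_append, peak_star, sum_star, ih,
      List.foldr_cons, zero_add]

/-! ### The normal-form transformation -/

def F (i : ZMod 3) : ℤ → List Letter → List Letter
  | _, [] => []
  | n, l :: L =>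
    if l = Letter.b (i-1) then F i (n+1) L
    else if l = Letter.d (i-1) then F i (n-1) L
    else List.replicate n.toNat (Letter.b (i-1)) ++
         l :: (List.replicate n.toNat (Letter.d (i-1)) ++ F i n L)

def K (i : ZMod 3) : ℤ → List Letter → List ℕ
  | _, [] => []
  | n, l :: L =>
    if l = Letter.b (i-1) then K i (n+1) L
    else if l = Letter.d (i-1) then K i (n-1) L
    else n.toNat :: K i n L

/-! ### The quotient monoid and the bracket unit -/

abbrev M := skCon.Quotient

def pi : Word →* M := skCon.mk'

lemma pi_rel {u v : Word} (h : SKRel u v) : pi u = pi v := by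
  have : skCon u v := ConGen.Rel.of _ _ h
  exact skCon.eq.mpr this

def g (l : Letter) : M := pi (FreeMonoid.of l)

def beta (i : ZMod 3) : Mˣ where
  val := g (Letter.b (i-1))
  inv := g (Letter.d (i-1))
  val_inv := by
    have h := pi_rel (SKRel.r4bd (i-1))
    simpa [g, b, d, map_mul, map_one] using h
  inv_val := by
    have h := pi_rel (SKRel.r4db (i-1))
    simpa [g, b, d, map_mul, map_one] using h

def Bz (i : ZMod 3) (n : ℤ) : M := ((beta i ^ n : (M)ˣ) : M)

lemma Bz_mul (i : ZMod 3) (m n : ℤ) : Bz i m * Bz i n = Bz i (m + n) := by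
  rw [Bz, Bz, Bz, zpow_add, Units.val_mul]

@[simp] lemma Bz_zero (i : ZMod 3) : Bz i 0 = 1 := by simp [Bz]

lemma g_b (i : ZMod 3) : g (Letter.b (i-1)) = Bz i 1 := by
  simp only [Bz, zpow_one]; rfl

lemma g_d (i : ZMod 3) : g (Letter.d (i-1)) = Bz i (-1) := by
  simp only [Bz, zpow_neg, zpow_one]; rfl

def P (L : List Letter) : M := (L.map g).prod

@[simp] lemma P_nil : P [] = 1 := rfl
@[simp] lemma P_cons (l : Letter) (L : List Letter) : P (l :: L) = g l * P L := by
  simp [P]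
@[simp] lemma P_append (A B : List Letter) : P (A ++ B) = P A * P B := by
  simp [P]

lemma P_rep_b (i : ZMod 3) (k : ℕ) :
    P (List.replicate k (Letter.b (i-1))) = Bz i k := by
  simp only [P, List.map_replicate, List.prod_replicate, g_b]
  induction k with
  | zero => simp
  | succ n ih =>
    rw [pow_succ, ih, Bz, Bz, Bz]
    push_cast
    rw [zpow_add, Units.val_mul, zpow_one]

lemma P_rep_d (i : ZMod 3) (k : ℕ) :
    P (List.replicate k (Letter.d (i-1))) = Bz i (-k) := by
  simp only [P, List.map_replicate, List.prod_replicate, g_d]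
  induction k with
  | zero => simp
  | succ n ih =>
    rw [pow_succ, ih, Bz, Bz, Bz]
    push_cast
    rw [neg_add, zpow_add, Units.val_mul]

lemma pi_ofList (L : List Letter) : pi (FreeMonoid.ofList L) = P L := by
  induction L with
  | nil => exact map_one pi
  | cons l L ih =>
    have h : FreeMonoid.ofList (l :: L) = FreeMonoid.of l * FreeMonoid.ofList L := rfl
    rw [h, map_mul, ih, P_cons]; rfl

/-! ### The key algebraic identity -/

lemma F_b (i : ZMod 3) (n : ℤ) (L : List Letter) :
    F i n (Letter.b (i-1) :: L) = F i (n+1) L := by simp [F]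

lemma F_d (i : ZMod 3) (n : ℤ) (L : List Letter) :
    F i n (Letter.d (i-1) :: L) = F i (n-1) L := by simp [F]

lemma F_o (i : ZMod 3) (n : ℤ) (l : Letter) (L : List Letter)
    (hb : l ≠ Letter.b (i-1)) (hd : l ≠ Letter.d (i-1)) :
    F i n (l :: L) = List.replicate n.toNat (Letter.b (i-1)) ++
      l :: (List.replicate n.toNat (Letter.d (i-1)) ++ F i n L) := by
  simp [F, hb, hd]

lemma K_b (i : ZMod 3) (n : ℤ) (L : List Letter) :
    K i n (Letter.b (i-1) :: L) = K i (n+1) L := by simp [K]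

lemma K_d (i : ZMod 3) (n : ℤ) (L : List Letter) :
    K i n (Letter.d (i-1) :: L) = K i (n-1) L := by simp [K]

lemma K_o (i : ZMod 3) (n : ℤ) (l : Letter) (L : List Letter)
    (hb : l ≠ Letter.b (i-1)) (hd : l ≠ Letter.d (i-1)) :
    K i n (l :: L) = n.toNat :: K i n L := by
  simp [K, hb, hd]

lemma key (i : ZMod 3) : ∀ (L : List Letter) (n : ℤ),
    (∀ p, p <+: L → 0 ≤ n + Sm i p) →
    P L = Bz i (-n) * P (F i n L) * Bz i (n + Sm i L) := by
  intro L
  induction L with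
  | nil =>
    intro n _
    show (1 : M) = Bz i (-n) * P (F i n []) * Bz i (n + Sm i [])
    rw [show F i n [] = [] from rfl]
    simp [mul_assoc, Bz_mul]
  | cons l L ih =>
    intro n h
    have h0 : 0 ≤ n := by simpa using h [] List.nil_prefix
    by_cases hb : l = Letter.b (i-1)
    · subst hb
      have hR : ∀ p, p <+: L → 0 ≤ (n+1) + Sm i p := by
        intro p hp
        have := h (Letter.b (i-1) :: p) (List.cons_prefix_cons.mpr ⟨rfl, hp⟩)
        simp only [Sm_cons, mval_b] at this
        omega
      rw [P_cons, ih (n+1) hR, g_b, F_b, Sm_cons, mval_b]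
      rw [← mul_assoc, ← mul_assoc, Bz_mul]
      have e1 : (1 : ℤ) + -(n+1) = -n := by ring
      have e2 : n + 1 + Sm i L = n + (1 + Sm i L) := by ring
      rw [e1, e2]
    · by_cases hd : l = Letter.d (i-1)
      · subst hd
        have hR : ∀ p, p <+: L → 0 ≤ (n-1) + Sm i p := by
          intro p hp
          have := h (Letter.d (i-1) :: p) (List.cons_prefix_cons.mpr ⟨rfl, hp⟩)
          simp only [Sm_cons, mval_d] at this
          omega
        rw [P_cons, ih (n-1) hR, g_d, F_d, Sm_cons, mval_d]
        rw [← mul_assoc, ← mul_assoc, Bz_mul]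
        have e1 : (-1 : ℤ) + -(n-1) = -n := by ring
        have e2 : n - 1 + Sm i L = n + (-1 + Sm i L) := by ring
        rw [e1, e2]
      · have hm : mval i l = 0 := by simp [mval, hb, hd]
        have hR : ∀ p, p <+: L → 0 ≤ n + Sm i p := by
          intro p hp
          have := h (l :: p) (List.cons_prefix_cons.mpr ⟨rfl, hp⟩)
          simp only [Sm_cons, hm] at this
          omega
        have hnt : (n.toNat : ℤ) = n := Int.toNat_of_nonneg h0
        rw [P_cons, ih n hR, F_o i n l L hb hd]
        rw [P_append, P_cons, P_append, P_rep_b, P_rep_d, hnt, Sm_cons, hm, zero_add]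
        symm
        calc Bz i (-n) * (Bz i n * (g l * (Bz i (-n) * P (F i n L)))) * Bz i (n + Sm i L)
            = (Bz i (-n) * Bz i n) * (g l *
                (Bz i (-n) * P (F i n L) * Bz i (n + Sm i L))) := by
              simp only [mul_assoc]
          _ = g l * (Bz i (-n) * P (F i n L) * Bz i (n + Sm i L)) := by
              rw [Bz_mul]; simp

/-! ### Letters appearing in `F` -/

lemma F_mem (i : ZMod 3) : ∀ (L : List Letter) (n : ℤ) (l : Letter), l ∈ F i n L →
    l ∈ L ∨ l = Letter.b (i-1) ∨ l = Letter.d (i-1) := by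
  intro L
  induction L with
  | nil => intro n l h; simp [F] at h
  | cons a L ih =>
    intro n l h
    by_cases hb : a = Letter.b (i-1)
    · subst hb; rw [F_b] at h
      rcases ih (n+1) l h with h|h|h
      · exact Or.inl (List.mem_cons_of_mem _ h)
      · exact Or.inr (Or.inl h)
      · exact Or.inr (Or.inr h)
    · by_cases hd : a = Letter.d (i-1)
      · subst hd; rw [F_d] at h
        rcases ih (n-1) l h with h|h|h
        · exact Or.inl (List.mem_cons_of_mem _ h)
        · exact Or.inr (Or.inl h)
        · exact Or.inr (Or.inr h)
      · rw [F_o i n a L hb hd] at h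
        simp only [List.mem_append, List.mem_cons, List.mem_replicate] at h
        rcases h with ⟨-, rfl⟩ | rfl | ⟨-, rfl⟩ | h
        · exact Or.inr (Or.inl rfl)
        · exact Or.inl List.mem_cons_self
        · exact Or.inr (Or.inr rfl)
        · rcases ih n l h with h|h|h
          · exact Or.inl (List.mem_cons_of_mem _ h)
          · exact Or.inr (Or.inl h)
          · exact Or.inr (Or.inr h)

/-! ### `F` produces a star decomposition -/

lemma F_mval (i : ZMod 3) : ∀ (L : List Letter) (n : ℤ),
    (F i n L).map (mval i) = ((K i n L).map _root_.star).flatten := by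
  intro L
  induction L with
  | nil => intro n; simp [F, K]
  | cons a L ih =>
    intro n
    by_cases hb : a = Letter.b (i-1)
    · subst hb; rw [F_b, K_b]; exact ih _
    · by_cases hd : a = Letter.d (i-1)
      · subst hd; rw [F_d, K_d]; exact ih _
      · rw [F_o i n a L hb hd, K_o i n a L hb hd]
        have hm : mval i a = 0 := by simp [mval, hb, hd]
        simp only [List.map_append, List.map_cons, List.map_replicate, mval_b, mval_d, hm,
          List.flatten_cons, ih, _root_.star]
        simp [List.append_assoc]

/-! ### Bound on the star depths -/

lemma K_le (i : ZMod 3) : ∀ (L : List Letter) (n : ℤ),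
    (∀ p, p <+: L → 0 ≤ n + Sm i p) →
    ∀ k ∈ K i n L, (k : ℤ) ≤ n + peak (L.map (mval i)) := by
  intro L
  induction L with
  | nil => intro n _ k hk; simp [K] at hk
  | cons a L ih =>
    intro n h k hk
    by_cases hb : a = Letter.b (i-1)
    · subst hb; rw [K_b] at hk
      have hR : ∀ p, p <+: L → 0 ≤ (n+1) + Sm i p := by
        intro p hp
        have := h (Letter.b (i-1) :: p) (List.cons_prefix_cons.mpr ⟨rfl, hp⟩)
        simp only [Sm_cons, mval_b] at this
        omega
      have := ih (n+1) hR k hk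
      simp only [List.map_cons, peak_cons, mval_b]
      omega
    · by_cases hd : a = Letter.d (i-1)
      · subst hd; rw [K_d] at hk
        have hR : ∀ p, p <+: L → 0 ≤ (n-1) + Sm i p := by
          intro p hp
          have := h (Letter.d (i-1) :: p) (List.cons_prefix_cons.mpr ⟨rfl, hp⟩)
          simp only [Sm_cons, mval_d] at this
          omega
        have := ih (n-1) hR k hk
        simp only [List.map_cons, peak_cons, mval_d]
        omega
      · have hm : mval i a = 0 := by simp [mval, hb, hd]
        have h0 : 0 ≤ n := by simpa using h [] List.nil_prefix
        have hR : ∀ p, p <+: L → 0 ≤ n + Sm i p := by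
          intro p hp
          have := h (a :: p) (List.cons_prefix_cons.mpr ⟨rfl, hp⟩)
          simp only [Sm_cons, hm] at this
          omega
        rw [K_o i n a L hb hd] at hk
        simp only [List.map_cons, peak_cons, hm]
        rcases List.mem_cons.mp hk with rfl | hk
        · have := Int.toNat_of_nonneg h0
          have := peak_nonneg (L.map (mval i))
          omega
        · have := ih n hR k hk
          omega

lemma foldr_max_const (c : ℤ) : ∀ (l : List ℕ), (∀ k ∈ l, (k:ℤ) ≤ c) →
    List.foldr max c (l.map (Nat.cast : ℕ → ℤ)) = c := by
  intro l
  induction l with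
  | nil => intro _; rfl
  | cons a l ih =>
    intro h
    have h1 := h a List.mem_cons_self
    have h2 := ih (fun k hk => h k (List.mem_cons_of_mem _ hk))
    simp only [List.map_cons, List.foldr_cons, h2]
    omega

/-! ### Relating `brackets` to `Sm` on the seven letters -/

lemma code_sum (i : ZMod 3) (l : Letter)
    (hl : l ∈ ({Letter.a i, Letter.b i, Letter.c i, Letter.d i, Letter.x i,
          Letter.b (i-1), Letter.d (i-1)} : Set Letter)) :
    (code i l).sum = mval i l := by
  simp only [Set.mem_insert_iff, Set.mem_singleton_iff] at hl
  rcases hl with rfl|rfl|rfl|rfl|rfl|rfl|rfl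
  · simp [code, mval]
  · simp [code, mval, (zne1 i).symm]
  · simp [code, mval]
  · simp [code, mval, (zne1 i).symm]
  · simp [code, mval]
  · simp [code, mval, zne1 i]
  · simp [code, mval, zne1 i, zne2 i]

lemma codes_sum (i : ZMod 3) : ∀ p : List Letter,
    (∀ l ∈ p, l ∈ ({Letter.a i, Letter.b i, Letter.c i, Letter.d i, Letter.x i,
          Letter.b (i-1), Letter.d (i-1)} : Set Letter)) →
    ((p.map (code i)).flatten).sum = Sm i p := by
  intro p
  induction p with
  | nil => intro _; rfl
  | cons l p ih =>
    intro h
    have h1 := code_sum i l (h l List.mem_cons_self)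
    have h2 := ih (fun l' hl' => h l' (List.mem_cons_of_mem _ hl'))
    simp [h1, h2]

lemma brackets_prefix (i : ZMod 3) (w : Word) (p : List Letter)
    (hp : p <+: FreeMonoid.toList w) :
    ((p.map (code i)).flatten) <+: brackets i w := by
  obtain ⟨r, hr⟩ := hp
  refine ⟨((r.map (code i)).flatten), ?_⟩
  show _ = ((FreeMonoid.toList w).map (code i)).flatten
  rw [← hr]
  simp

end Claim3Aux

/-- Claim 3: every i-balanced word on the seven letters
a_i, b_i, c_i, d_i, x_i, b_{i-1}, d_{i-1} is equivalent to a star decomposable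
word on the same seven letters of the same depth. -/
theorem claim3 (i : ZMod 3) : ∀ w : Word, OnSeven i w → IBalanced i w →
    ∃ w' : Word, skCon w w' ∧ OnSeven i w' ∧ StarDecomposable i w' ∧
      depth i w' = depth i w := by
  classical
  intro w hseven hbal
  open Claim3Aux in
  set Lw := FreeMonoid.toList w with hLw
  have hpre : ∀ p, p <+: Lw → 0 ≤ (0:ℤ) + Sm i p := by
    intro p hp
    have hmem : ∀ l ∈ p, l ∈ ({Letter.a i, Letter.b i, Letter.c i, Letter.d i, Letter.x i,
          Letter.b (i-1), Letter.d (i-1)} : Set Letter) :=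
      fun l hl => hseven l (hp.sublist.subset hl)
    have := hbal.1 _ (brackets_prefix i w p hp)
    rw [codes_sum i p hmem] at this
    omega
  have hsum : Sm i Lw = 0 := by
    have := hbal.2
    rw [show brackets i w = ((Lw.map (code i))).flatten from rfl,
      codes_sum i Lw hseven] at this
    exact this
  set D := depth i w with hD
  have hD0 : 0 ≤ D := depth_nonneg i w
  have hDn : ((D.toNat : ℤ)) = D := Int.toNat_of_nonneg hD0
  set V : List Letter := List.replicate D.toNat (Letter.b (i-1)) ++
    Letter.b i :: (List.replicate D.toNat (Letter.d (i-1)) ++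
    (List.replicate D.toNat (Letter.b (i-1)) ++
    Letter.d i :: List.replicate D.toNat (Letter.d (i-1)))) with hV
  have hpeakD : peak (Lw.map (mval i)) = D := by
    rw [hD, depth_eq_peak, muList_eq]
  -- the μ-image of V
  have hVm : V.map (mval i) = _root_.star D.toNat ++ _root_.star D.toNat := by
    rw [hV]
    simp only [List.map_append, List.map_cons, List.map_replicate, mval_b, mval_d,
      mval_bi, mval_di, _root_.star]
    simp [List.append_assoc]
  -- the μ-image of the candidate word
  have hmu : muList i (FreeMonoid.ofList (F i 0 Lw ++ V)) =
      (((K i 0 Lw ++ [D.toNat, D.toNat]).map _root_.star)).flatten := by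
    rw [muList_eq, FreeMonoid.toList_ofList, List.map_append, F_mval, hVm]
    simp
  refine ⟨FreeMonoid.ofList (F i 0 Lw ++ V), ?_, ?_, ?_, ?_⟩
  · -- skCon w w'
    have hbd : g (Letter.b i) * g (Letter.d i) = 1 := by
      have h := pi_rel (SKRel.r4bd i)
      simpa [g, b, d, map_mul, map_one] using h
    have e : ∀ X : M, Bz i (-(D.toNat:ℤ)) * (Bz i ((D.toNat:ℤ)) * X) = X := by
      intro X; rw [← mul_assoc, Bz_mul]; simp
    have hPV : P V = 1 := by
      rw [hV]
      simp only [P_append, P_cons, P_rep_b, P_rep_d]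
      rw [e, ← mul_assoc (g (Letter.b i)), hbd, one_mul, Bz_mul]
      simp
    have hPw : P Lw = P (F i 0 Lw) := by
      rw [key i Lw 0 hpre, hsum]
      simp
    have hpi : pi w = pi (FreeMonoid.ofList (F i 0 Lw ++ V)) := by
      rw [pi_ofList, P_append, hPV, mul_one, ← hPw, ← pi_ofList, hLw,
        FreeMonoid.ofList_toList]
    exact skCon.eq.mp hpi
  · -- OnSeven
    intro l hl
    rw [FreeMonoid.toList_ofList] at hl
    have hset : ∀ l' : Letter, l' = Letter.b i ∨ l' = Letter.d i ∨ l' = Letter.b (i-1) ∨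
        l' = Letter.d (i-1) →
        l' ∈ ({Letter.a i, Letter.b i, Letter.c i, Letter.d i, Letter.x i,
          Letter.b (i-1), Letter.d (i-1)} : Set Letter) := by
      intro l' h
      simp only [Set.mem_insert_iff, Set.mem_singleton_iff]
      tauto
    rcases List.mem_append.mp hl with h | h
    · rcases F_mem i Lw 0 l h with h|h|h
      · exact hseven l h
      · exact hset l (by tauto)
      · exact hset l (by tauto)
    · rw [hV] at h
      simp only [List.mem_append, List.mem_cons, List.mem_replicate] at h
      rcases h with ⟨-, rfl⟩ | rfl | ⟨-, rfl⟩ | ⟨-, rfl⟩ | rfl | ⟨-, rfl⟩ <;>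
        exact hset _ (by tauto)
  · -- StarDecomposable
    exact ⟨K i 0 Lw ++ [D.toNat, D.toNat], hmu⟩
  · -- depth
    rw [depth_eq_peak, hmu, peak_stars, List.map_append, List.foldr_append]
    have hinit : List.foldr max 0 ([D.toNat, D.toNat].map (Nat.cast : ℕ → ℤ)) = D := by
      simp only [List.map_cons, List.map_nil, List.foldr_cons, List.foldr_nil, hDn]
      omega
    rw [hinit]
    refine foldr_max_const D (K i 0 Lw) ?_
    intro k hk
    have := K_le i Lw 0 hpre k hk
    rw [hpeakD] at this
    omega
end

section
/- Fix i in Z/3. Every star decomposable word w on the seven letters a_i, b_i, c_i, d_i, x_i, b_{i-1}, d_{i-1} is ~-equivalent to a concatenation of words from the ten-element set {a_i, b_i, c_i, d_i, x_i, b_{i-1} a_i d_{i-1}, b_{i-1} b_i d_{i-1}, b_{i-1} c_i d_{i-1}, b_{i-1} d_i d_{i-1}, b_{i-1} x_i d_{i-1}}. -/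
set_option maxHeartbeats 2000000
namespace SKAux

lemma zm1 (i : ZMod 3) : i + 1 + 1 = i - 1 := by
  have h3 : (3 : ZMod 3) = 0 := rfl
  linear_combination h3

lemma zm2 (i : ZMod 3) : i - 1 - 1 = i + 1 := by
  have h3 : (3 : ZMod 3) = 0 := rfl
  linear_combination -h3

lemma zm3 (i : ZMod 3) : i + 1 - 1 = i := by ring

lemma zm4 (i : ZMod 3) : i - 1 + 1 = i := by ring

lemma rel {u v : Word} (h : SKRel u v) : skCon u v := ConGen.Rel.of u v h

lemma step (L R : Word) {u v : Word} (h : skCon u v) : skCon (L * u * R) (L * v * R) :=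
  ((skCon.refl L).mul h).mul (skCon.refl R)

lemma comm_inv {s u v : Word} (hc : skCon (u * s) (s * u)) (h1 : skCon (v * u) 1)
    (h2 : skCon (u * v) 1) : skCon (v * s) (s * v) := by
  have e1 : skCon (v * s) (v * (s * (u * v))) := by
    simpa only [mul_assoc, mul_one] using skCon.mul (skCon.refl (v * s)) (skCon.symm h2)
  have e2 : skCon (v * (s * (u * v))) (v * (u * (s * v))) := by
    simpa only [mul_assoc] using skCon.mul (skCon.refl v) (skCon.mul (skCon.symm hc) (skCon.refl v))
  have e3 : skCon (v * (u * (s * v))) (s * v) := by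
    simpa only [mul_assoc, one_mul] using skCon.mul h1 (skCon.refl (s * v))
  exact (e1.trans e2).trans e3

lemma G_r3 (j : ZMod 3) : skCon (d j * d (j + 1) * d (j - 1)) 1 := by
  have h012 : skCon (d 0 * d 1 * d 2) 1 := rel SKRel.r3
  have key : ∀ p q r : ZMod 3, skCon (d p * d q * d r) 1 → skCon (d q * d r * d p) 1 := by
    intro p q r h
    have e1 : skCon (d q * (d r * d p)) (b p * (d p * (d q * (d r * d p)))) := by
      simpa only [mul_assoc, one_mul] using
        skCon.mul (skCon.symm (rel (SKRel.r4bd p))) (skCon.refl (d q * (d r * d p)))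
    have e2 : skCon (b p * (d p * (d q * (d r * d p)))) (b p * d p) := by
      simpa only [mul_assoc, one_mul] using
        skCon.mul (skCon.refl (b p)) (skCon.mul h (skCon.refl (d p)))
    have := skCon.trans (skCon.trans e1 e2) (rel (SKRel.r4bd p))
    simpa only [mul_assoc] using this
  have h120 := key 0 1 2 h012
  have h201 := key 1 2 0 h120
  have hj := (by decide : ∀ k : ZMod 3, k = 0 ∨ k = 1 ∨ k = 2) j
  rcases hj with h | h | h <;> subst h
  · simpa only [show (0 : ZMod 3) + 1 = 1 by decide, show (0 : ZMod 3) - 1 = 2 by decide] using h012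
  · simpa only [show (1 : ZMod 3) + 1 = 2 by decide, show (1 : ZMod 3) - 1 = 0 by decide] using h120
  · simpa only [show (2 : ZMod 3) + 1 = 0 by decide, show (2 : ZMod 3) - 1 = 1 by decide] using h201

lemma G_D1a (j : ZMod 3) : skCon (d j * (d (j + 1))) (b (j - 1)) := by
  have h0 : skCon (d j * (d (j + 1))) (d j * (d (j + 1) * (d (j - 1) * (b (j - 1))))) := by
    simpa only [mul_assoc, one_mul, mul_one, t, t', zm1 j, zm2 j, zm3 j, zm4 j] using step (d j * (d (j + 1))) (1) ((rel (SKRel.r4db (j - 1))).symm)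
  have h1 : skCon (d j * (d (j + 1) * (d (j - 1) * (b (j - 1))))) (b (j - 1)) := by
    simpa only [mul_assoc, one_mul, mul_one, t, t', zm1 j, zm2 j, zm3 j, zm4 j] using step (1) (b (j - 1)) (G_r3 j)
  exact h0.trans (h1)

lemma G_D1b (j : ZMod 3) : skCon (b (j + 1) * (b j)) (d (j - 1)) := by
  have h0 : skCon (b (j + 1) * (b j)) (b (j + 1) * (b j * (d j * (d (j + 1) * (d (j - 1)))))) := by
    simpa only [mul_assoc, one_mul, mul_one, t, t', zm1 j, zm2 j, zm3 j, zm4 j] using step (b (j + 1) * (b j)) (1) ((G_r3 j).symm)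
  have h1 : skCon (b (j + 1) * (b j * (d j * (d (j + 1) * (d (j - 1)))))) (b (j + 1) * (d (j + 1) * (d (j - 1)))) := by
    simpa only [mul_assoc, one_mul, mul_one, t, t', zm1 j, zm2 j, zm3 j, zm4 j] using step (b (j + 1)) (d (j + 1) * (d (j - 1))) (rel (SKRel.r4bd j))
  have h2 : skCon (b (j + 1) * (d (j + 1) * (d (j - 1)))) (d (j - 1)) := by
    simpa only [mul_assoc, one_mul, mul_one, t, t', zm1 j, zm2 j, zm3 j, zm4 j] using step (1) (d (j - 1)) (rel (SKRel.r4bd (j + 1)))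
  exact h0.trans (h1.trans (h2))

lemma G_D3 (j : ZMod 3) : skCon (a j * (b (j - 1))) (a (j + 1)) := by
  have h0 : skCon (a j * (b (j - 1))) (a (j + 1) * (d (j - 1) * (b (j - 1)))) := by
    simpa only [mul_assoc, one_mul, mul_one, t, t', zm1 j, zm2 j, zm3 j, zm4 j] using step (1) (b (j - 1)) (rel (SKRel.r1a j))
  have h1 : skCon (a (j + 1) * (d (j - 1) * (b (j - 1)))) (a (j + 1)) := by
    simpa only [mul_assoc, one_mul, mul_one, t, t', zm1 j, zm2 j, zm3 j, zm4 j] using step (a (j + 1)) (1) (rel (SKRel.r4db (j - 1)))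
  exact h0.trans (h1)

lemma G_D4 (j : ZMod 3) : skCon (d (j - 1) * (c j)) (c (j + 1)) := by
  have h0 : skCon (d (j - 1) * (c j)) (d (j - 1) * (b (j - 1) * (c (j + 1)))) := by
    simpa only [mul_assoc, one_mul, mul_one, t, t', zm1 j, zm2 j, zm3 j, zm4 j] using step (d (j - 1)) (1) (rel (SKRel.r1c j))
  have h1 : skCon (d (j - 1) * (b (j - 1) * (c (j + 1)))) (c (j + 1)) := by
    simpa only [mul_assoc, one_mul, mul_one, t, t', zm1 j, zm2 j, zm3 j, zm4 j] using step (1) (c (j + 1)) (rel (SKRel.r4db (j - 1)))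
  exact h0.trans (h1)

lemma G_tt (j : ZMod 3) : skCon (b (j + 1) * (d (j - 1) * (d (j + 1) * (b (j - 1) * (d (j - 1) * (b (j + 1) * (b (j - 1) * (d (j + 1))))))))) (1) := by
  have h0 : skCon (b (j + 1) * (d (j - 1) * (d (j + 1) * (b (j - 1) * (d (j - 1) * (b (j + 1) * (b (j - 1) * (d (j + 1))))))))) (b (j + 1) * (d (j - 1) * (d (j + 1) * (b (j + 1) * (b (j - 1) * (d (j + 1))))))) := by
    simpa only [mul_assoc, one_mul, mul_one, t, t', zm1 j, zm2 j, zm3 j, zm4 j] using step (b (j + 1) * (d (j - 1) * (d (j + 1)))) (b (j + 1) * (b (j - 1) * (d (j + 1)))) (rel (SKRel.r4bd (j - 1)))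
  have h1 : skCon (b (j + 1) * (d (j - 1) * (d (j + 1) * (b (j + 1) * (b (j - 1) * (d (j + 1))))))) (b (j + 1) * (d (j - 1) * (b (j - 1) * (d (j + 1))))) := by
    simpa only [mul_assoc, one_mul, mul_one, t, t', zm1 j, zm2 j, zm3 j, zm4 j] using step (b (j + 1) * (d (j - 1))) (b (j - 1) * (d (j + 1))) (rel (SKRel.r4db (j + 1)))
  have h2 : skCon (b (j + 1) * (d (j - 1) * (b (j - 1) * (d (j + 1))))) (b (j + 1) * (d (j + 1))) := by
    simpa only [mul_assoc, one_mul, mul_one, t, t', zm1 j, zm2 j, zm3 j, zm4 j] using step (b (j + 1)) (d (j + 1)) (rel (SKRel.r4db (j - 1)))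
  have h3 : skCon (b (j + 1) * (d (j + 1))) (1) := by
    simpa only [mul_assoc, one_mul, mul_one, t, t', zm1 j, zm2 j, zm3 j, zm4 j] using step (1) (1) (rel (SKRel.r4bd (j + 1)))
  exact h0.trans (h1.trans (h2.trans (h3)))

lemma G_ttp (j : ZMod 3) : skCon (d (j - 1) * (b (j + 1) * (b (j - 1) * (d (j + 1) * (b (j + 1) * (d (j - 1) * (d (j + 1) * (b (j - 1))))))))) (1) := by
  have h0 : skCon (d (j - 1) * (b (j + 1) * (b (j - 1) * (d (j + 1) * (b (j + 1) * (d (j - 1) * (d (j + 1) * (b (j - 1))))))))) (d (j - 1) * (b (j + 1) * (b (j - 1) * (d (j - 1) * (d (j + 1) * (b (j - 1))))))) := by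
    simpa only [mul_assoc, one_mul, mul_one, t, t', zm1 j, zm2 j, zm3 j, zm4 j] using step (d (j - 1) * (b (j + 1) * (b (j - 1)))) (d (j - 1) * (d (j + 1) * (b (j - 1)))) (rel (SKRel.r4db (j + 1)))
  have h1 : skCon (d (j - 1) * (b (j + 1) * (b (j - 1) * (d (j - 1) * (d (j + 1) * (b (j - 1))))))) (d (j - 1) * (b (j + 1) * (d (j + 1) * (b (j - 1))))) := by
    simpa only [mul_assoc, one_mul, mul_one, t, t', zm1 j, zm2 j, zm3 j, zm4 j] using step (d (j - 1) * (b (j + 1))) (d (j + 1) * (b (j - 1))) (rel (SKRel.r4bd (j - 1)))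
  have h2 : skCon (d (j - 1) * (b (j + 1) * (d (j + 1) * (b (j - 1))))) (d (j - 1) * (b (j - 1))) := by
    simpa only [mul_assoc, one_mul, mul_one, t, t', zm1 j, zm2 j, zm3 j, zm4 j] using step (d (j - 1)) (b (j - 1)) (rel (SKRel.r4bd (j + 1)))
  have h3 : skCon (d (j - 1) * (b (j - 1))) (1) := by
    simpa only [mul_assoc, one_mul, mul_one, t, t', zm1 j, zm2 j, zm3 j, zm4 j] using step (1) (1) (rel (SKRel.r4db (j - 1)))
  exact h0.trans (h1.trans (h2.trans (h3)))


lemma G_r9b (j : ZMod 3) : skCon ((b (j + 1) * (d (j - 1) * (d (j + 1) * b (j - 1)))) * b j)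
    (b j * (b (j + 1) * (d (j - 1) * (d (j + 1) * b (j - 1))))) := by
  simpa only [t, mul_assoc] using rel (SKRel.r9 j (b j) (by simp))

lemma G_D7b (j : ZMod 3) : skCon ((d (j - 1) * (b (j + 1) * (b (j - 1) * d (j + 1)))) * b j)
    (b j * (d (j - 1) * (b (j + 1) * (b (j - 1) * d (j + 1))))) := by
  have h1 : skCon ((d (j - 1) * (b (j + 1) * (b (j - 1) * d (j + 1)))) *
      (b (j + 1) * (d (j - 1) * (d (j + 1) * b (j - 1))))) 1 := by
    simpa only [mul_assoc] using G_ttp j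
  have h2 : skCon ((b (j + 1) * (d (j - 1) * (d (j + 1) * b (j - 1)))) *
      (d (j - 1) * (b (j + 1) * (b (j - 1) * d (j + 1))))) 1 := by
    simpa only [mul_assoc] using G_tt j
  have h := comm_inv (G_r9b j) h1 h2
  simpa only [mul_assoc] using h

lemma G_E9t (j : ZMod 3) : skCon (d j * (b (j + 1) * (d (j - 1) * (d (j + 1) * b (j - 1)))))
    ((b (j + 1) * (d (j - 1) * (d (j + 1) * b (j - 1)))) * d j) := by
  have h := comm_inv (G_r9b j).symm (rel (SKRel.r4db j)) (rel (SKRel.r4bd j))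
  simpa only [mul_assoc] using h

lemma G_E8 (j : ZMod 3) : skCon (d (j + 1) * (a j * b j)) ((a j * b j) * d (j + 1)) := by
  have h := comm_inv (rel (SKRel.r8 j (b (j + 1)) (by simp))).symm
    (rel (SKRel.r4db (j + 1))) (rel (SKRel.r4bd (j + 1)))
  simpa only [mul_assoc] using h

lemma G_E10 (j : ZMod 3) : skCon (d (j + 1) * (d j * (x j * b j)))
    ((d j * (x j * b j)) * d (j + 1)) := by
  have h := comm_inv (rel (SKRel.r10 j (b (j + 1)) (by simp))).symm
    (rel (SKRel.r4db (j + 1))) (rel (SKRel.r4bd (j + 1)))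
  simpa only [mul_assoc] using h


lemma phi2a (i : ZMod 3) : skCon (b (i - 1) * (b (i - 1) * (a i * (d (i - 1) * (d (i - 1)))))) (b (i - 1) * (a i * (d (i - 1) * (d i * (d i * (b (i - 1) * (b i * (d (i - 1) * (b i))))))))) := by
  have h0 : skCon (b (i - 1) * (b (i - 1) * (a i * (d (i - 1) * (d (i - 1)))))) (b (i - 1) * (b (i - 1) * (a (i + 1) * (d (i - 1) * (d (i - 1) * (d (i - 1))))))) := by
    simpa only [mul_assoc, one_mul, mul_one, t, t', zm1 i, zm2 i, zm3 i, zm4 i] using step (b (i - 1) * (b (i - 1))) (d (i - 1) * (d (i - 1))) (rel (SKRel.r1a i))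
  have h1 : skCon (b (i - 1) * (b (i - 1) * (a (i + 1) * (d (i - 1) * (d (i - 1) * (d (i - 1))))))) (b (i - 1) * (b (i - 1) * (a (i + 1) * (b (i + 1) * (b i * (d (i - 1) * (d (i - 1)))))))) := by
    simpa only [mul_assoc, one_mul, mul_one, t, t', zm1 i, zm2 i, zm3 i, zm4 i] using step (b (i - 1) * (b (i - 1) * (a (i + 1)))) (d (i - 1) * (d (i - 1))) ((G_D1b i).symm)
  have h2 : skCon (b (i - 1) * (b (i - 1) * (a (i + 1) * (b (i + 1) * (b i * (d (i - 1) * (d (i - 1)))))))) (b (i - 1) * (b (i - 1) * (a (i + 1) * (b (i + 1) * (b i * (d (i - 1) * (b (i + 1) * (b i)))))))) := by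
    simpa only [mul_assoc, one_mul, mul_one, t, t', zm1 i, zm2 i, zm3 i, zm4 i] using step (b (i - 1) * (b (i - 1) * (a (i + 1) * (b (i + 1) * (b i * (d (i - 1))))))) (1) ((G_D1b i).symm)
  have h3 : skCon (b (i - 1) * (b (i - 1) * (a (i + 1) * (b (i + 1) * (b i * (d (i - 1) * (b (i + 1) * (b i)))))))) (b (i - 1) * (a (i + 1) * (b (i + 1) * (b (i - 1) * (b i * (d (i - 1) * (b (i + 1) * (b i)))))))) := by
    simpa only [mul_assoc, one_mul, mul_one, t, t', zm1 i, zm2 i, zm3 i, zm4 i] using step (b (i - 1)) (b i * (d (i - 1) * (b (i + 1) * (b i)))) ((rel (SKRel.r8 (i + 1) (b ((i + 1) + 1)) (by simp))).symm)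
  have h4 : skCon (b (i - 1) * (a (i + 1) * (b (i + 1) * (b (i - 1) * (b i * (d (i - 1) * (b (i + 1) * (b i)))))))) (b (i - 1) * (a i * (b (i - 1) * (b (i + 1) * (b (i - 1) * (b i * (d (i - 1) * (b (i + 1) * (b i))))))))) := by
    simpa only [mul_assoc, one_mul, mul_one, t, t', zm1 i, zm2 i, zm3 i, zm4 i] using step (b (i - 1)) (b (i + 1) * (b (i - 1) * (b i * (d (i - 1) * (b (i + 1) * (b i)))))) ((G_D3 i).symm)
  have h5 : skCon (b (i - 1) * (a i * (b (i - 1) * (b (i + 1) * (b (i - 1) * (b i * (d (i - 1) * (b (i + 1) * (b i))))))))) (b (i - 1) * (a i * (d i * (b (i - 1) * (b i * (d (i - 1) * (b (i + 1) * (b i)))))))) := by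
    simpa only [mul_assoc, one_mul, mul_one, t, t', zm1 i, zm2 i, zm3 i, zm4 i] using step (b (i - 1) * (a i)) (b (i - 1) * (b i * (d (i - 1) * (b (i + 1) * (b i))))) (G_D1b (i + 1))
  have h6 : skCon (b (i - 1) * (a i * (d i * (b (i - 1) * (b i * (d (i - 1) * (b (i + 1) * (b i)))))))) (b (i - 1) * (a i * (b (i + 1) * (d i * (b (i - 1) * (b i * (d (i - 1) * (b i)))))))) := by
    simpa only [mul_assoc, one_mul, mul_one, t, t', zm1 i, zm2 i, zm3 i, zm4 i] using step (b (i - 1) * (a i)) (b i) (G_D7b (i + 1))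
  have h7 : skCon (b (i - 1) * (a i * (b (i + 1) * (d i * (b (i - 1) * (b i * (d (i - 1) * (b i)))))))) (b (i - 1) * (a i * (d (i - 1) * (d i * (d i * (b (i - 1) * (b i * (d (i - 1) * (b i))))))))) := by
    simpa only [mul_assoc, one_mul, mul_one, t, t', zm1 i, zm2 i, zm3 i, zm4 i] using step (b (i - 1) * (a i)) (d i * (b (i - 1) * (b i * (d (i - 1) * (b i))))) ((G_D1a (i - 1)).symm)
  exact h0.trans (h1.trans (h2.trans (h3.trans (h4.trans (h5.trans (h6.trans (h7)))))))

lemma phi2b (i : ZMod 3) : skCon (b (i - 1) * (b (i - 1) * (b i * (d (i - 1) * (d (i - 1)))))) (b (i - 1) * (b i * (d (i - 1) * (d i * (d i * (b (i - 1) * (b i * (d (i - 1) * (b i))))))))) := by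
  have h0 : skCon (b (i - 1) * (b (i - 1) * (b i * (d (i - 1) * (d (i - 1)))))) (b (i - 1) * (b i * (d i * (b (i - 1) * (b i * (d (i - 1) * (d (i - 1)))))))) := by
    simpa only [mul_assoc, one_mul, mul_one, t, t', zm1 i, zm2 i, zm3 i, zm4 i] using step (b (i - 1)) (b (i - 1) * (b i * (d (i - 1) * (d (i - 1))))) ((rel (SKRel.r4bd i)).symm)
  have h1 : skCon (b (i - 1) * (b i * (d i * (b (i - 1) * (b i * (d (i - 1) * (d (i - 1)))))))) (b (i - 1) * (b i * (d i * (b (i - 1) * (b i * (d (i - 1) * (b (i + 1) * (b i)))))))) := by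
    simpa only [mul_assoc, one_mul, mul_one, t, t', zm1 i, zm2 i, zm3 i, zm4 i] using step (b (i - 1) * (b i * (d i * (b (i - 1) * (b i * (d (i - 1))))))) (1) ((G_D1b i).symm)
  have h2 : skCon (b (i - 1) * (b i * (d i * (b (i - 1) * (b i * (d (i - 1) * (b (i + 1) * (b i)))))))) (b (i - 1) * (b i * (b (i + 1) * (d i * (b (i - 1) * (b i * (d (i - 1) * (b i)))))))) := by
    simpa only [mul_assoc, one_mul, mul_one, t, t', zm1 i, zm2 i, zm3 i, zm4 i] using step (b (i - 1) * (b i)) (b i) (G_D7b (i + 1))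
  have h3 : skCon (b (i - 1) * (b i * (b (i + 1) * (d i * (b (i - 1) * (b i * (d (i - 1) * (b i)))))))) (b (i - 1) * (b i * (d (i - 1) * (d i * (d i * (b (i - 1) * (b i * (d (i - 1) * (b i))))))))) := by
    simpa only [mul_assoc, one_mul, mul_one, t, t', zm1 i, zm2 i, zm3 i, zm4 i] using step (b (i - 1) * (b i)) (d i * (b (i - 1) * (b i * (d (i - 1) * (b i))))) ((G_D1a (i - 1)).symm)
  exact h0.trans (h1.trans (h2.trans (h3)))

lemma phi2c (i : ZMod 3) : skCon (b (i - 1) * (b (i - 1) * (c i * (d (i - 1) * (d (i - 1)))))) (d i * (b (i - 1) * (d i * (d (i - 1) * (b i * (b i * (b (i - 1) * (c i * (d (i - 1)))))))))) := by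
  have h0 : skCon (b (i - 1) * (b (i - 1) * (c i * (d (i - 1) * (d (i - 1)))))) (b (i - 1) * (b (i - 1) * (b (i - 1) * (c (i + 1) * (d (i - 1) * (d (i - 1))))))) := by
    simpa only [mul_assoc, one_mul, mul_one, t, t', zm1 i, zm2 i, zm3 i, zm4 i] using step (b (i - 1) * (b (i - 1))) (d (i - 1) * (d (i - 1))) (rel (SKRel.r1c i))
  have h1 : skCon (b (i - 1) * (b (i - 1) * (b (i - 1) * (c (i + 1) * (d (i - 1) * (d (i - 1))))))) (d i * (d (i + 1) * (b (i - 1) * (b (i - 1) * (c (i + 1) * (d (i - 1) * (d (i - 1)))))))) := by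
    simpa only [mul_assoc, one_mul, mul_one, t, t', zm1 i, zm2 i, zm3 i, zm4 i] using step (1) (b (i - 1) * (b (i - 1) * (c (i + 1) * (d (i - 1) * (d (i - 1)))))) ((G_D1a i).symm)
  have h2 : skCon (d i * (d (i + 1) * (b (i - 1) * (b (i - 1) * (c (i + 1) * (d (i - 1) * (d (i - 1)))))))) (d i * (d (i + 1) * (b (i - 1) * (d i * (d (i + 1) * (c (i + 1) * (d (i - 1) * (d (i - 1))))))))) := by
    simpa only [mul_assoc, one_mul, mul_one, t, t', zm1 i, zm2 i, zm3 i, zm4 i] using step (d i * (d (i + 1) * (b (i - 1)))) (c (i + 1) * (d (i - 1) * (d (i - 1)))) ((G_D1a i).symm)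
  have h3 : skCon (d i * (d (i + 1) * (b (i - 1) * (d i * (d (i + 1) * (c (i + 1) * (d (i - 1) * (d (i - 1))))))))) (d i * (d (i + 1) * (b (i - 1) * (d i * (d (i + 1) * (c (i + 1) * (a i * (c (i + 1) * (d (i - 1)))))))))) := by
    simpa only [mul_assoc, one_mul, mul_one, t, t', zm1 i, zm2 i, zm3 i, zm4 i] using step (d i * (d (i + 1) * (b (i - 1) * (d i * (d (i + 1) * (c (i + 1))))))) (d (i - 1)) (rel (SKRel.r1d (i - 1)))
  have h4 : skCon (d i * (d (i + 1) * (b (i - 1) * (d i * (d (i + 1) * (c (i + 1) * (a i * (c (i + 1) * (d (i - 1)))))))))) (d i * (d (i + 1) * (b (i - 1) * (d i * (d (i + 1) * (c (i + 1) * (a i * (b i * (c (i - 1) * (d (i - 1))))))))))) := by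
    simpa only [mul_assoc, one_mul, mul_one, t, t', zm1 i, zm2 i, zm3 i, zm4 i] using step (d i * (d (i + 1) * (b (i - 1) * (d i * (d (i + 1) * (c (i + 1) * (a i))))))) (d (i - 1)) (rel (SKRel.r1c (i + 1)))
  have h5 : skCon (d i * (d (i + 1) * (b (i - 1) * (d i * (d (i + 1) * (c (i + 1) * (a i * (b i * (c (i - 1) * (d (i - 1))))))))))) (d i * (d (i + 1) * (b (i - 1) * (d i * (d (i + 1) * (a i * (b i * (c (i + 1) * (c (i - 1) * (d (i - 1))))))))))) := by
    simpa only [mul_assoc, one_mul, mul_one, t, t', zm1 i, zm2 i, zm3 i, zm4 i] using step (d i * (d (i + 1) * (b (i - 1) * (d i * (d (i + 1)))))) (c (i - 1) * (d (i - 1))) ((rel (SKRel.r8 i (c (i + 1)) (by simp))).symm)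
  have h6 : skCon (d i * (d (i + 1) * (b (i - 1) * (d i * (d (i + 1) * (a i * (b i * (c (i + 1) * (c (i - 1) * (d (i - 1))))))))))) (d i * (d (i + 1) * (b (i - 1) * (d i * (a i * (b i * (d (i + 1) * (c (i + 1) * (c (i - 1) * (d (i - 1))))))))))) := by
    simpa only [mul_assoc, one_mul, mul_one, t, t', zm1 i, zm2 i, zm3 i, zm4 i] using step (d i * (d (i + 1) * (b (i - 1) * (d i)))) (c (i + 1) * (c (i - 1) * (d (i - 1)))) (G_E8 i)
  have h7 : skCon (d i * (d (i + 1) * (b (i - 1) * (d i * (a i * (b i * (d (i + 1) * (c (i + 1) * (c (i - 1) * (d (i - 1))))))))))) (d i * (d (i + 1) * (b (i - 1) * (d i * (a i * (b i * (c (i - 1) * (d (i + 1) * (c (i + 1) * (d (i - 1))))))))))) := by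
    simpa only [mul_assoc, one_mul, mul_one, t, t', zm1 i, zm2 i, zm3 i, zm4 i] using step (d i * (d (i + 1) * (b (i - 1) * (d i * (a i * (b i)))))) (d (i - 1)) (rel (SKRel.r7 (i + 1) (c ((i + 1) + 1)) (by simp)))
  have h8 : skCon (d i * (d (i + 1) * (b (i - 1) * (d i * (a i * (b i * (c (i - 1) * (d (i + 1) * (c (i + 1) * (d (i - 1))))))))))) (d i * (d (i + 1) * (b (i - 1) * (d i * (a i * (b i * (c (i - 1) * (d (i + 1) * (d (i - 1) * (c i * (d (i - 1)))))))))))) := by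
    simpa only [mul_assoc, one_mul, mul_one, t, t', zm1 i, zm2 i, zm3 i, zm4 i] using step (d i * (d (i + 1) * (b (i - 1) * (d i * (a i * (b i * (c (i - 1) * (d (i + 1))))))))) (d (i - 1)) ((G_D4 i).symm)
  have h9 : skCon (d i * (d (i + 1) * (b (i - 1) * (d i * (a i * (b i * (c (i - 1) * (d (i + 1) * (d (i - 1) * (c i * (d (i - 1)))))))))))) (d i * (d (i + 1) * (b (i - 1) * (d i * (a i * (c (i + 1) * (d (i + 1) * (d (i - 1) * (c i * (d (i - 1))))))))))) := by
    simpa only [mul_assoc, one_mul, mul_one, t, t', zm1 i, zm2 i, zm3 i, zm4 i] using step (d i * (d (i + 1) * (b (i - 1) * (d i * (a i))))) (d (i + 1) * (d (i - 1) * (c i * (d (i - 1))))) ((rel (SKRel.r1c (i + 1))).symm)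
  have h10 : skCon (d i * (d (i + 1) * (b (i - 1) * (d i * (a i * (c (i + 1) * (d (i + 1) * (d (i - 1) * (c i * (d (i - 1))))))))))) (d i * (d (i + 1) * (b (i - 1) * (d i * (a i * (c (i + 1) * (b i * (c i * (d (i - 1)))))))))) := by
    simpa only [mul_assoc, one_mul, mul_one, t, t', zm1 i, zm2 i, zm3 i, zm4 i] using step (d i * (d (i + 1) * (b (i - 1) * (d i * (a i * (c (i + 1))))))) (c i * (d (i - 1))) (G_D1a (i + 1))
  have h11 : skCon (d i * (d (i + 1) * (b (i - 1) * (d i * (a i * (c (i + 1) * (b i * (c i * (d (i - 1)))))))))) (d i * (d (i + 1) * (b (i - 1) * (d i * (d (i - 1) * (b i * (c i * (d (i - 1))))))))) := by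
    simpa only [mul_assoc, one_mul, mul_one, t, t', zm1 i, zm2 i, zm3 i, zm4 i] using step (d i * (d (i + 1) * (b (i - 1) * (d i)))) (b i * (c i * (d (i - 1)))) ((rel (SKRel.r1d (i - 1))).symm)
  have h12 : skCon (d i * (d (i + 1) * (b (i - 1) * (d i * (d (i - 1) * (b i * (c i * (d (i - 1))))))))) (d i * (b (i - 1) * (d i * (d (i - 1) * (b i * (d (i + 1) * (c i * (d (i - 1))))))))) := by
    simpa only [mul_assoc, one_mul, mul_one, t, t', zm1 i, zm2 i, zm3 i, zm4 i] using step (d i) (c i * (d (i - 1))) (G_E9t (i + 1))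
  have h13 : skCon (d i * (b (i - 1) * (d i * (d (i - 1) * (b i * (d (i + 1) * (c i * (d (i - 1))))))))) (d i * (b (i - 1) * (d i * (d (i - 1) * (b i * (b i * (b (i - 1) * (c i * (d (i - 1)))))))))) := by
    simpa only [mul_assoc, one_mul, mul_one, t, t', zm1 i, zm2 i, zm3 i, zm4 i] using step (d i * (b (i - 1) * (d i * (d (i - 1) * (b i))))) (c i * (d (i - 1))) ((G_D1b (i - 1)).symm)
  exact h0.trans (h1.trans (h2.trans (h3.trans (h4.trans (h5.trans (h6.trans (h7.trans (h8.trans (h9.trans (h10.trans (h11.trans (h12.trans (h13)))))))))))))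

lemma phi2d (i : ZMod 3) : skCon (b (i - 1) * (b (i - 1) * (d i * (d (i - 1) * (d (i - 1)))))) (d i * (b (i - 1) * (d i * (d (i - 1) * (b i * (b i * (b (i - 1) * (d i * (d (i - 1)))))))))) := by
  have h0 : skCon (b (i - 1) * (b (i - 1) * (d i * (d (i - 1) * (d (i - 1)))))) (b (i - 1) * (b (i - 1) * (d i * (d (i - 1) * (b i * (d i * (d (i - 1)))))))) := by
    simpa only [mul_assoc, one_mul, mul_one, t, t', zm1 i, zm2 i, zm3 i, zm4 i] using step (b (i - 1) * (b (i - 1) * (d i * (d (i - 1))))) (d (i - 1)) ((rel (SKRel.r4bd i)).symm)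
  have h1 : skCon (b (i - 1) * (b (i - 1) * (d i * (d (i - 1) * (b i * (d i * (d (i - 1)))))))) (d i * (d (i + 1) * (b (i - 1) * (d i * (d (i - 1) * (b i * (d i * (d (i - 1))))))))) := by
    simpa only [mul_assoc, one_mul, mul_one, t, t', zm1 i, zm2 i, zm3 i, zm4 i] using step (1) (b (i - 1) * (d i * (d (i - 1) * (b i * (d i * (d (i - 1))))))) ((G_D1a i).symm)
  have h2 : skCon (d i * (d (i + 1) * (b (i - 1) * (d i * (d (i - 1) * (b i * (d i * (d (i - 1))))))))) (d i * (b (i - 1) * (d i * (d (i - 1) * (b i * (d (i + 1) * (d i * (d (i - 1))))))))) := by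
    simpa only [mul_assoc, one_mul, mul_one, t, t', zm1 i, zm2 i, zm3 i, zm4 i] using step (d i) (d i * (d (i - 1))) (G_E9t (i + 1))
  have h3 : skCon (d i * (b (i - 1) * (d i * (d (i - 1) * (b i * (d (i + 1) * (d i * (d (i - 1))))))))) (d i * (b (i - 1) * (d i * (d (i - 1) * (b i * (b i * (b (i - 1) * (d i * (d (i - 1)))))))))) := by
    simpa only [mul_assoc, one_mul, mul_one, t, t', zm1 i, zm2 i, zm3 i, zm4 i] using step (d i * (b (i - 1) * (d i * (d (i - 1) * (b i))))) (d i * (d (i - 1))) ((G_D1b (i - 1)).symm)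
  exact h0.trans (h1.trans (h2.trans (h3)))

lemma phi2x (i : ZMod 3) : skCon (b (i - 1) * (b (i - 1) * (x i * (d (i - 1) * (d (i - 1)))))) (b (i - 1) * (b i * (d (i - 1) * (d i * (d i * (b (i - 1) * (x i * (d (i - 1) * (b i * (b i * (b (i - 1) * (d i * (d (i - 1)))))))))))))) := by
  have h0 : skCon (b (i - 1) * (b (i - 1) * (x i * (d (i - 1) * (d (i - 1)))))) (d i * (d (i + 1) * (b (i - 1) * (x i * (d (i - 1) * (d (i - 1))))))) := by
    simpa only [mul_assoc, one_mul, mul_one, t, t', zm1 i, zm2 i, zm3 i, zm4 i] using step (1) (b (i - 1) * (x i * (d (i - 1) * (d (i - 1))))) ((G_D1a i).symm)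
  have h1 : skCon (d i * (d (i + 1) * (b (i - 1) * (x i * (d (i - 1) * (d (i - 1))))))) (d i * (b (i - 1) * (d (i - 1) * (d (i + 1) * (b (i - 1) * (x i * (d (i - 1) * (d (i - 1))))))))) := by
    simpa only [mul_assoc, one_mul, mul_one, t, t', zm1 i, zm2 i, zm3 i, zm4 i] using step (d i) (d (i + 1) * (b (i - 1) * (x i * (d (i - 1) * (d (i - 1)))))) ((rel (SKRel.r4bd (i - 1))).symm)
  have h2 : skCon (d i * (b (i - 1) * (d (i - 1) * (d (i + 1) * (b (i - 1) * (x i * (d (i - 1) * (d (i - 1))))))))) (d i * (b (i - 1) * (d (i + 1) * (b (i + 1) * (d (i - 1) * (d (i + 1) * (b (i - 1) * (x i * (d (i - 1) * (d (i - 1))))))))))) := by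
    simpa only [mul_assoc, one_mul, mul_one, t, t', zm1 i, zm2 i, zm3 i, zm4 i] using step (d i * (b (i - 1))) (d (i - 1) * (d (i + 1) * (b (i - 1) * (x i * (d (i - 1) * (d (i - 1))))))) ((rel (SKRel.r4db (i + 1))).symm)
  have h3 : skCon (d i * (b (i - 1) * (d (i + 1) * (b (i + 1) * (d (i - 1) * (d (i + 1) * (b (i - 1) * (x i * (d (i - 1) * (d (i - 1))))))))))) (d i * (b (i - 1) * (d (i + 1) * (b i * (d i * (b (i + 1) * (d (i - 1) * (d (i + 1) * (b (i - 1) * (x i * (d (i - 1) * (d (i - 1))))))))))))) := by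
    simpa only [mul_assoc, one_mul, mul_one, t, t', zm1 i, zm2 i, zm3 i, zm4 i] using step (d i * (b (i - 1) * (d (i + 1)))) (b (i + 1) * (d (i - 1) * (d (i + 1) * (b (i - 1) * (x i * (d (i - 1) * (d (i - 1)))))))) ((rel (SKRel.r4bd i)).symm)
  have h4 : skCon (d i * (b (i - 1) * (d (i + 1) * (b i * (d i * (b (i + 1) * (d (i - 1) * (d (i + 1) * (b (i - 1) * (x i * (d (i - 1) * (d (i - 1))))))))))))) (d i * (b (i - 1) * (d (i + 1) * (b i * (d i * (x i * (b (i + 1) * (d (i - 1) * (d (i + 1) * (b (i - 1) * (d (i - 1) * (d (i - 1))))))))))))) := by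
    simpa only [mul_assoc, one_mul, mul_one, t, t', zm1 i, zm2 i, zm3 i, zm4 i] using step (d i * (b (i - 1) * (d (i + 1) * (b i * (d i))))) (d (i - 1) * (d (i - 1))) (rel (SKRel.r9 i (x i) (by simp)))
  have h5 : skCon (d i * (b (i - 1) * (d (i + 1) * (b i * (d i * (x i * (b (i + 1) * (d (i - 1) * (d (i + 1) * (b (i - 1) * (d (i - 1) * (d (i - 1))))))))))))) (d i * (b (i - 1) * (d (i + 1) * (b i * (d i * (x i * (b (i + 1) * (d (i - 1) * (d (i + 1) * (d (i - 1))))))))))) := by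
    simpa only [mul_assoc, one_mul, mul_one, t, t', zm1 i, zm2 i, zm3 i, zm4 i] using step (d i * (b (i - 1) * (d (i + 1) * (b i * (d i * (x i * (b (i + 1) * (d (i - 1) * (d (i + 1)))))))))) (d (i - 1)) (rel (SKRel.r4bd (i - 1)))
  have h6 : skCon (d i * (b (i - 1) * (d (i + 1) * (b i * (d i * (x i * (b (i + 1) * (d (i - 1) * (d (i + 1) * (d (i - 1))))))))))) (d i * (b (i - 1) * (d (i + 1) * (b i * (d i * (x i * (b i * (d i * (b (i + 1) * (d (i - 1) * (d (i + 1) * (d (i - 1))))))))))))) := by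
    simpa only [mul_assoc, one_mul, mul_one, t, t', zm1 i, zm2 i, zm3 i, zm4 i] using step (d i * (b (i - 1) * (d (i + 1) * (b i * (d i * (x i)))))) (b (i + 1) * (d (i - 1) * (d (i + 1) * (d (i - 1))))) ((rel (SKRel.r4bd i)).symm)
  have h7 : skCon (d i * (b (i - 1) * (d (i + 1) * (b i * (d i * (x i * (b i * (d i * (b (i + 1) * (d (i - 1) * (d (i + 1) * (d (i - 1))))))))))))) (d i * (b (i - 1) * (d (i + 1) * (b i * (d i * (x i * (b i * (d i * (b (i + 1) * (d (i - 1) * (b i))))))))))) := by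
    simpa only [mul_assoc, one_mul, mul_one, t, t', zm1 i, zm2 i, zm3 i, zm4 i] using step (d i * (b (i - 1) * (d (i + 1) * (b i * (d i * (x i * (b i * (d i * (b (i + 1) * (d (i - 1))))))))))) (1) (G_D1a (i + 1))
  have h8 : skCon (d i * (b (i - 1) * (d (i + 1) * (b i * (d i * (x i * (b i * (d i * (b (i + 1) * (d (i - 1) * (b i))))))))))) (d i * (b (i - 1) * (d (i + 1) * (b i * (b (i + 1) * (d (i + 1) * (d i * (x i * (b i * (d i * (b (i + 1) * (d (i - 1) * (b i))))))))))))) := by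
    simpa only [mul_assoc, one_mul, mul_one, t, t', zm1 i, zm2 i, zm3 i, zm4 i] using step (d i * (b (i - 1) * (d (i + 1) * (b i)))) (d i * (x i * (b i * (d i * (b (i + 1) * (d (i - 1) * (b i))))))) ((rel (SKRel.r4bd (i + 1))).symm)
  have h9 : skCon (d i * (b (i - 1) * (d (i + 1) * (b i * (b (i + 1) * (d (i + 1) * (d i * (x i * (b i * (d i * (b (i + 1) * (d (i - 1) * (b i))))))))))))) (d i * (b (i - 1) * (d (i + 1) * (b i * (b (i + 1) * (d i * (x i * (b i * (d (i + 1) * (d i * (b (i + 1) * (d (i - 1) * (b i))))))))))))) := by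
    simpa only [mul_assoc, one_mul, mul_one, t, t', zm1 i, zm2 i, zm3 i, zm4 i] using step (d i * (b (i - 1) * (d (i + 1) * (b i * (b (i + 1)))))) (d i * (b (i + 1) * (d (i - 1) * (b i)))) (G_E10 i)
  have h10 : skCon (d i * (b (i - 1) * (d (i + 1) * (b i * (b (i + 1) * (d i * (x i * (b i * (d (i + 1) * (d i * (b (i + 1) * (d (i - 1) * (b i))))))))))))) (d i * (d (i + 1) * (b i * (b (i + 1) * (d i * (b (i - 1) * (x i * (b i * (d (i + 1) * (d i * (b (i + 1) * (d (i - 1) * (b i))))))))))))) := by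
    simpa only [mul_assoc, one_mul, mul_one, t, t', zm1 i, zm2 i, zm3 i, zm4 i] using step (d i) (x i * (b i * (d (i + 1) * (d i * (b (i + 1) * (d (i - 1) * (b i))))))) ((G_D7b (i - 1)).symm)
  have h11 : skCon (d i * (d (i + 1) * (b i * (b (i + 1) * (d i * (b (i - 1) * (x i * (b i * (d (i + 1) * (d i * (b (i + 1) * (d (i - 1) * (b i))))))))))))) (b (i - 1) * (b i * (b (i + 1) * (d i * (b (i - 1) * (x i * (b i * (d (i + 1) * (d i * (b (i + 1) * (d (i - 1) * (b i)))))))))))) := by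
    simpa only [mul_assoc, one_mul, mul_one, t, t', zm1 i, zm2 i, zm3 i, zm4 i] using step (1) (b i * (b (i + 1) * (d i * (b (i - 1) * (x i * (b i * (d (i + 1) * (d i * (b (i + 1) * (d (i - 1) * (b i))))))))))) (G_D1a i)
  have h12 : skCon (b (i - 1) * (b i * (b (i + 1) * (d i * (b (i - 1) * (x i * (b i * (d (i + 1) * (d i * (b (i + 1) * (d (i - 1) * (b i)))))))))))) (b (i - 1) * (b i * (d (i - 1) * (d i * (d i * (b (i - 1) * (x i * (b i * (d (i + 1) * (d i * (b (i + 1) * (d (i - 1) * (b i))))))))))))) := by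
    simpa only [mul_assoc, one_mul, mul_one, t, t', zm1 i, zm2 i, zm3 i, zm4 i] using step (b (i - 1) * (b i)) (d i * (b (i - 1) * (x i * (b i * (d (i + 1) * (d i * (b (i + 1) * (d (i - 1) * (b i))))))))) ((G_D1a (i - 1)).symm)
  have h13 : skCon (b (i - 1) * (b i * (d (i - 1) * (d i * (d i * (b (i - 1) * (x i * (b i * (d (i + 1) * (d i * (b (i + 1) * (d (i - 1) * (b i))))))))))))) (b (i - 1) * (b i * (d (i - 1) * (d i * (d i * (b (i - 1) * (x i * (d (i - 1) * (b i * (d (i + 1) * (d i * (b (i + 1) * (b i))))))))))))) := by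
    simpa only [mul_assoc, one_mul, mul_one, t, t', zm1 i, zm2 i, zm3 i, zm4 i] using step (b (i - 1) * (b i * (d (i - 1) * (d i * (d i * (b (i - 1) * (x i))))))) (b i) ((G_E9t (i - 1)).symm)
  have h14 : skCon (b (i - 1) * (b i * (d (i - 1) * (d i * (d i * (b (i - 1) * (x i * (d (i - 1) * (b i * (d (i + 1) * (d i * (b (i + 1) * (b i))))))))))))) (b (i - 1) * (b i * (d (i - 1) * (d i * (d i * (b (i - 1) * (x i * (d (i - 1) * (b i * (d (i + 1) * (d i * (d (i - 1))))))))))))) := by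
    simpa only [mul_assoc, one_mul, mul_one, t, t', zm1 i, zm2 i, zm3 i, zm4 i] using step (b (i - 1) * (b i * (d (i - 1) * (d i * (d i * (b (i - 1) * (x i * (d (i - 1) * (b i * (d (i + 1) * (d i))))))))))) (1) (G_D1b i)
  have h15 : skCon (b (i - 1) * (b i * (d (i - 1) * (d i * (d i * (b (i - 1) * (x i * (d (i - 1) * (b i * (d (i + 1) * (d i * (d (i - 1))))))))))))) (b (i - 1) * (b i * (d (i - 1) * (d i * (d i * (b (i - 1) * (x i * (d (i - 1) * (b i * (b i * (b (i - 1) * (d i * (d (i - 1)))))))))))))) := by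
    simpa only [mul_assoc, one_mul, mul_one, t, t', zm1 i, zm2 i, zm3 i, zm4 i] using step (b (i - 1) * (b i * (d (i - 1) * (d i * (d i * (b (i - 1) * (x i * (d (i - 1) * (b i))))))))) (d i * (d (i - 1))) ((G_D1b (i - 1)).symm)
  exact h0.trans (h1.trans (h2.trans (h3.trans (h4.trans (h5.trans (h6.trans (h7.trans (h8.trans (h9.trans (h10.trans (h11.trans (h12.trans (h13.trans (h14.trans (h15)))))))))))))))

def genSet (i : ZMod 3) : Set Word :=
  {a i, b i, c i, d i, x i,
   b (i-1) * a i * d (i-1), b (i-1) * b i * d (i-1),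
   b (i-1) * c i * d (i-1), b (i-1) * d i * d (i-1),
   b (i-1) * x i * d (i-1)}

def fiveSet (i : ZMod 3) : Set Word := {a i, b i, c i, d i, x i}

lemma pow_cancel_db (i : ZMod 3) : ∀ k : ℕ, skCon ((d (i-1))^k * (b (i-1))^k) 1
  | 0 => by simpa using skCon.refl (1 : Word)
  | (k+1) => by
    have e : (d (i-1))^(k+1) * (b (i-1))^(k+1)
        = (d (i-1))^k * (d (i-1) * b (i-1)) * (b (i-1))^k := by
      rw [pow_succ, pow_succ']; simp only [mul_assoc]
    have h1 := step ((d (i-1))^k) ((b (i-1))^k) (rel (SKRel.r4db (i-1)))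
    have h2 : skCon ((d (i-1))^k * (d (i-1) * b (i-1)) * (b (i-1))^k)
        ((d (i-1))^k * (b (i-1))^k) := by
      simpa only [mul_assoc, mul_one, one_mul] using h1
    rw [e]
    exact h2.trans (pow_cancel_db i k)

lemma pow_cancel_bd (i : ZMod 3) : ∀ k : ℕ, skCon ((b (i-1))^k * (d (i-1))^k) 1
  | 0 => by simpa using skCon.refl (1 : Word)
  | (k+1) => by
    have e : (b (i-1))^(k+1) * (d (i-1))^(k+1)
        = (b (i-1))^k * (b (i-1) * d (i-1)) * (d (i-1))^k := by
      rw [pow_succ, pow_succ']; simp only [mul_assoc]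
    have h1 := step ((b (i-1))^k) ((d (i-1))^k) (rel (SKRel.r4bd (i-1)))
    have h2 : skCon ((b (i-1))^k * (b (i-1) * d (i-1)) * (d (i-1))^k)
        ((b (i-1))^k * (d (i-1))^k) := by
      simpa only [mul_assoc, mul_one, one_mul] using h1
    rw [e]
    exact h2.trans (pow_cancel_bd i k)

lemma conj_split (i : ZMod 3) (k : ℕ) (u v : Word) :
    skCon ((b (i-1))^k * (u * v) * (d (i-1))^k)
      (((b (i-1))^k * u * (d (i-1))^k) * ((b (i-1))^k * v * (d (i-1))^k)) := by
  have inner : skCon (u * v) (u * ((d (i-1))^k * ((b (i-1))^k * v))) := by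
    simpa only [mul_assoc, one_mul, mul_one] using
      skCon.mul (skCon.refl u) (skCon.mul (skCon.symm (pow_cancel_db i k)) (skCon.refl v))
  have h := step ((b (i-1))^k) ((d (i-1))^k) inner
  simpa only [mul_assoc] using h

lemma pow_shape (u v y : Word) (k : ℕ) :
    u^(k+2) * y * v^(k+2) = u^k * (u * (u * (y * (v * v)))) * v^k := by
  rw [pow_succ, pow_succ, pow_succ', pow_succ']; simp only [mul_assoc]

lemma pow_wrap (u v y : Word) (k : ℕ) :
    u^k * (u * y * v) * v^k = u^(k+1) * y * v^(k+1) := by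
  rw [pow_succ, pow_succ']; simp only [mul_assoc]

lemma five_sub_gen {i : ZMod 3} {y : Word} (hy : y ∈ fiveSet i) : y ∈ genSet i := by
  simp only [fiveSet, Set.mem_insert_iff, Set.mem_singleton_iff] at hy
  rcases hy with rfl | rfl | rfl | rfl | rfl <;> simp [genSet]

lemma conj_five_gen {i : ZMod 3} {y : Word} (hy : y ∈ fiveSet i) :
    b (i-1) * y * d (i-1) ∈ genSet i := by
  simp only [fiveSet, Set.mem_insert_iff, Set.mem_singleton_iff] at hy
  rcases hy with rfl | rfl | rfl | rfl | rfl <;> simp [genSet]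

/-- key block reduction -/
lemma blk_red (i : ZMod 3) : ∀ k : ℕ, ∀ y : Word, y ∈ fiveSet i →
    ∃ ws : List Word, (∀ u ∈ ws, u ∈ genSet i) ∧
      skCon ((b (i-1))^k * y * (d (i-1))^k) ws.prod := by
  intro k
  induction k using Nat.strong_induction_on with
  | _ k IH =>
    rcases k with _ | k1
    · intro y hy
      refine ⟨[y], ?_, ?_⟩
      · intro u hu; simp only [List.mem_singleton] at hu; subst hu; exact five_sub_gen hy
      · simpa using skCon.refl y
    rcases k1 with _ | m
    · intro y hy
      refine ⟨[b (i-1) * y * d (i-1)], ?_, ?_⟩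
      · intro u hu; simp only [List.mem_singleton] at hu; subst hu; exact conj_five_gen hy
      · have : (b (i-1))^1 * y * (d (i-1))^1 = b (i-1) * y * d (i-1) := by
          rw [pow_one, pow_one]
        rw [this]
        simpa using skCon.refl (b (i-1) * y * d (i-1))
    -- k = m + 2
    intro y hy
    -- generic list handler
    have gen_block : ∀ gs : List Word, (∀ g ∈ gs, g ∈ genSet i) →
        ∃ ws : List Word, (∀ u ∈ ws, u ∈ genSet i) ∧
          skCon ((b (i-1))^m * gs.prod * (d (i-1))^m) ws.prod := by
      intro gs
      induction gs with
      | nil =>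
        intro _
        refine ⟨[], by simp, ?_⟩
        have : (b (i-1))^m * ([] : List Word).prod * (d (i-1))^m
            = (b (i-1))^m * (d (i-1))^m := by simp
        rw [this]
        simpa using pow_cancel_bd i m
      | cons g gs ih =>
        intro hg
        obtain ⟨ws2, hws2, hc2⟩ := ih (fun u hu => hg u (List.mem_cons_of_mem _ hu))
        have hgmem : g ∈ genSet i := hg g List.mem_cons_self
        have hhead : ∃ ws1 : List Word, (∀ u ∈ ws1, u ∈ genSet i) ∧
            skCon ((b (i-1))^m * g * (d (i-1))^m) ws1.prod := by
          simp only [genSet, Set.mem_insert_iff, Set.mem_singleton_iff] at hgmem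
          rcases hgmem with rfl | rfl | rfl | rfl | rfl | rfl | rfl | rfl | rfl | rfl
          · exact IH m (by omega) (a i) (by simp [fiveSet])
          · exact IH m (by omega) (b i) (by simp [fiveSet])
          · exact IH m (by omega) (c i) (by simp [fiveSet])
          · exact IH m (by omega) (d i) (by simp [fiveSet])
          · exact IH m (by omega) (x i) (by simp [fiveSet])
          · rw [pow_wrap]; exact IH (m+1) (by omega) (a i) (by simp [fiveSet])
          · rw [pow_wrap]; exact IH (m+1) (by omega) (b i) (by simp [fiveSet])
          · rw [pow_wrap]; exact IH (m+1) (by omega) (c i) (by simp [fiveSet])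
          · rw [pow_wrap]; exact IH (m+1) (by omega) (d i) (by simp [fiveSet])
          · rw [pow_wrap]; exact IH (m+1) (by omega) (x i) (by simp [fiveSet])
        obtain ⟨ws1, hws1, hc1⟩ := hhead
        refine ⟨ws1 ++ ws2, ?_, ?_⟩
        · intro u hu
          rcases List.mem_append.mp hu with h | h
          · exact hws1 u h
          · exact hws2 u h
        · rw [List.prod_cons, List.prod_append]
          exact (conj_split i m g gs.prod).trans (hc1.mul hc2)
    -- now per-letter case
    simp only [fiveSet, Set.mem_insert_iff, Set.mem_singleton_iff] at hy
    have docase : ∀ (T : Word) (gs : List Word),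
        skCon (b (i-1) * (b (i-1) * (y * (d (i-1) * d (i-1))))) T →
        gs.prod = T → (∀ g ∈ gs, g ∈ genSet i) →
        ∃ ws : List Word, (∀ u ∈ ws, u ∈ genSet i) ∧
          skCon ((b (i-1))^(m+2) * y * (d (i-1))^(m+2)) ws.prod := by
      intro T gs hT hprod hgs
      obtain ⟨ws, hws, hc⟩ := gen_block gs hgs
      refine ⟨ws, hws, ?_⟩
      have h1 : skCon ((b (i-1))^(m+2) * y * (d (i-1))^(m+2))
          ((b (i-1))^m * gs.prod * (d (i-1))^m) := by
        rw [pow_shape, hprod]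
        exact step ((b (i-1))^m) ((d (i-1))^m) hT
      exact h1.trans hc
    rcases hy with rfl | rfl | rfl | rfl | rfl
    · refine docase _ [b (i-1) * a i * d (i-1), d i, d i, b (i-1) * b i * d (i-1), b i]
        (phi2a i) ?_ ?_
      · simp only [List.prod_cons, List.prod_nil, mul_one, mul_assoc]
      · intro g hg
        simp only [List.mem_cons, List.not_mem_nil, or_false] at hg
        rcases hg with rfl | rfl | rfl | rfl | rfl <;> simp [genSet]
    · refine docase _ [b (i-1) * b i * d (i-1), d i, d i, b (i-1) * b i * d (i-1), b i]
        (phi2b i) ?_ ?_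
      · simp only [List.prod_cons, List.prod_nil, mul_one, mul_assoc]
      · intro g hg
        simp only [List.mem_cons, List.not_mem_nil, or_false] at hg
        rcases hg with rfl | rfl | rfl | rfl | rfl <;> simp [genSet]
    · refine docase _ [d i, b (i-1) * d i * d (i-1), b i, b i, b (i-1) * c i * d (i-1)]
        (phi2c i) ?_ ?_
      · simp only [List.prod_cons, List.prod_nil, mul_one, mul_assoc]
      · intro g hg
        simp only [List.mem_cons, List.not_mem_nil, or_false] at hg
        rcases hg with rfl | rfl | rfl | rfl | rfl <;> simp [genSet]
    · refine docase _ [d i, b (i-1) * d i * d (i-1), b i, b i, b (i-1) * d i * d (i-1)]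
        (phi2d i) ?_ ?_
      · simp only [List.prod_cons, List.prod_nil, mul_one, mul_assoc]
      · intro g hg
        simp only [List.mem_cons, List.not_mem_nil, or_false] at hg
        rcases hg with rfl | rfl | rfl | rfl | rfl <;> simp [genSet]
    · refine docase _ [b (i-1) * b i * d (i-1), d i, d i, b (i-1) * x i * d (i-1), b i, b i,
        b (i-1) * d i * d (i-1)] (phi2x i) ?_ ?_
      · simp only [List.prod_cons, List.prod_nil, mul_one, mul_assoc]
      · intro g hg
        simp only [List.mem_cons, List.not_mem_nil, or_false] at hg
        rcases hg with rfl | rfl | rfl | rfl | rfl | rfl | rfl <;> simp [genSet]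

def sevenSet (i : ZMod 3) : Set Letter :=
  {Letter.a i, Letter.b i, Letter.c i, Letter.d i, Letter.x i,
   Letter.b (i-1), Letter.d (i-1)}

lemma sub_one_ne (i : ZMod 3) : i - 1 ≠ i := by
  rw [Ne, sub_eq_self]; decide

lemma mu_single (i : ZMod 3) (l : Letter) : ∃ z : ℤ, mu i l = [z] := by
  cases l with
  | a j => exact ⟨0, rfl⟩
  | b j => dsimp [mu]; split <;> exact ⟨_, rfl⟩
  | c j => exact ⟨0, rfl⟩
  | d j => dsimp [mu]; split <;> exact ⟨_, rfl⟩
  | x j => exact ⟨0, rfl⟩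

lemma mu_one {i : ZMod 3} {l : Letter} (h7 : l ∈ sevenSet i) (hm : mu i l = [1]) :
    l = Letter.b (i-1) := by
  simp only [sevenSet, Set.mem_insert_iff, Set.mem_singleton_iff] at h7
  rcases h7 with rfl | rfl | rfl | rfl | rfl | rfl | rfl
  · simp [mu] at hm
  · rw [mu, if_neg (sub_one_ne i).symm] at hm; simp at hm
  · simp [mu] at hm
  · rw [mu, if_neg (sub_one_ne i).symm] at hm; simp at hm
  · simp [mu] at hm
  · rfl
  · rw [mu, if_pos rfl] at hm; simp at hm

lemma mu_negone {i : ZMod 3} {l : Letter} (h7 : l ∈ sevenSet i) (hm : mu i l = [-1]) :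
    l = Letter.d (i-1) := by
  simp only [sevenSet, Set.mem_insert_iff, Set.mem_singleton_iff] at h7
  rcases h7 with rfl | rfl | rfl | rfl | rfl | rfl | rfl
  · simp [mu] at hm
  · rw [mu, if_neg (sub_one_ne i).symm] at hm; simp at hm
  · simp [mu] at hm
  · rw [mu, if_neg (sub_one_ne i).symm] at hm; simp at hm
  · simp [mu] at hm
  · rw [mu, if_pos rfl] at hm; simp at hm
  · rfl

lemma mu_zero {i : ZMod 3} {l : Letter} (h7 : l ∈ sevenSet i) (hm : mu i l = [0]) :
    FreeMonoid.of l ∈ fiveSet i := by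
  simp only [sevenSet, Set.mem_insert_iff, Set.mem_singleton_iff] at h7
  rcases h7 with rfl | rfl | rfl | rfl | rfl | rfl | rfl
  · simp [fiveSet, a]
  · simp [fiveSet, b]
  · simp [fiveSet, c]
  · simp [fiveSet, d]
  · simp [fiveSet, x]
  · rw [mu, if_pos rfl] at hm; simp at hm
  · rw [mu, if_pos rfl] at hm; simp at hm

lemma muList_cons (i : ZMod 3) (l : Letter) (w : Word) :
    muList i (FreeMonoid.of l * w) = mu i l ++ muList i w := rfl

lemma onSeven_cons {i : ZMod 3} {l : Letter} {w : Word}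
    (h : OnSeven i (FreeMonoid.of l * w)) : l ∈ sevenSet i ∧ OnSeven i w := by
  constructor
  · exact h l List.mem_cons_self
  · intro l' hl'
    exact h l' (List.mem_cons_of_mem _ hl')

lemma peel {i : ZMod 3} {w : Word} {m : ℤ} {rest : List ℤ}
    (hm : muList i w = m :: rest) :
    ∃ (l : Letter) (w' : Word), w = FreeMonoid.of l * w' ∧ mu i l = [m] ∧
      muList i w' = rest := by
  rcases hcase : FreeMonoid.toList w with _ | ⟨l, tl⟩
  · have hw : w = 1 := by rw [← FreeMonoid.ofList_toList w, hcase]; rfl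
    rw [hw] at hm
    simp [muList] at hm
  · have hw : w = FreeMonoid.of l * FreeMonoid.ofList tl := by
      rw [← FreeMonoid.ofList_toList w, hcase]; rfl
    obtain ⟨z, hz⟩ := mu_single i l
    have hm2 : muList i w = z :: muList i (FreeMonoid.ofList tl) := by
      rw [hw, muList_cons, hz]; rfl
    rw [hm] at hm2
    injection hm2 with h1 h2
    exact ⟨l, FreeMonoid.ofList tl, hw, by rw [hz, h1], h2.symm⟩

lemma peel_rep {i : ZMod 3} {m : ℤ} {lspec : Letter}
    (hforce : ∀ l : Letter, l ∈ sevenSet i → mu i l = [m] → l = lspec) :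
    ∀ (k : ℕ) (w : Word), OnSeven i w →
      ∀ {rest : List ℤ}, muList i w = List.replicate k m ++ rest →
      ∃ w' : Word, w = (FreeMonoid.of lspec)^k * w' ∧ OnSeven i w' ∧
        muList i w' = rest := by
  intro k
  induction k with
  | zero =>
    intro w h7 rest hm
    exact ⟨w, by simp, h7, by simpa using hm⟩
  | succ k ih =>
    intro w h7 rest hm
    rw [List.replicate_succ, List.cons_append] at hm
    obtain ⟨l, w', hw, hl, hm'⟩ := peel hm
    rw [hw] at h7
    obtain ⟨hl7, h7'⟩ := onSeven_cons h7
    have : l = lspec := hforce l hl7 hl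
    subst this
    obtain ⟨w'', hw'', h7'', hm''⟩ := ih w' h7' hm'
    refine ⟨w'', ?_, h7'', hm''⟩
    rw [hw, hw'', pow_succ']
    simp only [mul_assoc]

lemma star_extract {i : ZMod 3} {k : ℕ} {w : Word} {rest : List ℤ}
    (h7 : OnSeven i w) (hm : muList i w = _root_.star k ++ rest) :
    ∃ (y : Word) (w' : Word), y ∈ fiveSet i ∧
      w = (b (i-1))^k * y * (d (i-1))^k * w' ∧ OnSeven i w' ∧
      muList i w' = rest := by
  have hm1 : muList i w = List.replicate k 1 ++ ([0] ++ (List.replicate k (-1) ++ rest)) := by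
    rw [hm]; simp [_root_.star, List.append_assoc]
  obtain ⟨w1, hw1, h71, hm1'⟩ := peel_rep (fun l h hm => mu_one h hm) k w h7 hm1
  obtain ⟨l, w2, hw2, hl0, hm2⟩ := peel hm1'
  rw [hw2] at h71
  obtain ⟨hl7, h72⟩ := onSeven_cons h71
  obtain ⟨w3, hw3, h73, hm3⟩ := peel_rep (fun l h hm => mu_negone h hm) k w2 h72 hm2
  refine ⟨FreeMonoid.of l, w3, mu_zero hl7 hl0, ?_, h73, hm3⟩
  rw [hw1, hw2, hw3]
  simp only [b, d, mul_assoc]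

lemma muList_nil {i : ZMod 3} {w : Word} (h : muList i w = []) : w = 1 := by
  rcases hcase : FreeMonoid.toList w with _ | ⟨l, tl⟩
  · rw [← FreeMonoid.ofList_toList w, hcase]; rfl
  · exfalso
    have hw : w = FreeMonoid.of l * FreeMonoid.ofList tl := by
      rw [← FreeMonoid.ofList_toList w, hcase]; rfl
    obtain ⟨z, hz⟩ := mu_single i l
    rw [hw, muList_cons, hz] at h
    simp at h

lemma main (i : ZMod 3) : ∀ (ks : List ℕ) (w : Word), OnSeven i w →
    muList i w = (ks.map _root_.star).flatten →
    ∃ ws : List Word, (∀ u ∈ ws, u ∈ genSet i) ∧ skCon w ws.prod := by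
  intro ks
  induction ks with
  | nil =>
    intro w _ hm
    simp only [List.map_nil, List.flatten_nil] at hm
    refine ⟨[], by simp, ?_⟩
    rw [muList_nil hm]
    simpa using skCon.refl (1 : Word)
  | cons k ks ih =>
    intro w h7 hm
    rw [List.map_cons, List.flatten_cons] at hm
    obtain ⟨y, w', hy, hw, h7', hm'⟩ := star_extract h7 hm
    obtain ⟨ws1, hws1, hc1⟩ := blk_red i k y hy
    obtain ⟨ws2, hws2, hc2⟩ := ih w' h7' hm'
    refine ⟨ws1 ++ ws2, ?_, ?_⟩
    · intro u hu
      rcases List.mem_append.mp hu with h | h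
      · exact hws1 u h
      · exact hws2 u h
    · rw [List.prod_append, hw]
      exact hc1.mul hc2
end SKAux

/-- Claim 4: every star decomposable word on the seven letters is equivalent to
a concatenation of words from the set
{a_i, b_i, c_i, d_i, x_i, b_{i-1} a_i d_{i-1}, b_{i-1} b_i d_{i-1},
 b_{i-1} c_i d_{i-1}, b_{i-1} d_i d_{i-1}, b_{i-1} x_i d_{i-1}}. -/
theorem claim4 (i : ZMod 3) : ∀ w : Word, OnSeven i w → StarDecomposable i w →
    ∃ ws : List Word,
      (∀ u ∈ ws,
        u ∈ ({a i, b i, c i, d i, x i,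
              b (i-1) * a i * d (i-1), b (i-1) * b i * d (i-1),
              b (i-1) * c i * d (i-1), b (i-1) * d i * d (i-1),
              b (i-1) * x i * d (i-1)} : Set Word)) ∧
      skCon w ws.prod := by
  intro w h7 hSD
  obtain ⟨ks, hks⟩ := hSD
  obtain ⟨ws, hws, hc⟩ := SKAux.main i ks w h7 hks
  exact ⟨ws, fun u hu => hws u hu, hc⟩
end

section
/- Let U_l denote any of the five words Xi_l, Eta_l, Sig_l, SigInv_l, Tau_l. Then the following equivalences hold in SK for all integers k, l >= 1: (phi-11) Xi_k U_l ~ U_{l+2} Xi_k whenever l >= k; (phi-12) Eta_k U_l ~ U_{l-2} Eta_k whenever l >= k+2; (phi-13) Sig_k U_l ~ U_l Sig_k whenever l >= k+2; (phi-14) Tau_k U_l ~ U_l Tau_k whenever l >= k+2. -/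
/-- φ(ξ_k) = d_2^k c_2 b_2^{k-1}. -/
def Xi (k : ℕ) : Word := d 2 ^ k * c 2 * b 2 ^ (k-1)
/-- φ(η_k) = d_2^{k-1} a_2 b_2^k. -/
def Eta (k : ℕ) : Word := d 2 ^ (k-1) * a 2 * b 2 ^ k
/-- φ(σ_k) = d_2^{k-1} b_1 d_2 d_1 b_2^k. -/
def Sig (k : ℕ) : Word := d 2 ^ (k-1) * b 1 * d 2 * d 1 * b 2 ^ k
/-- φ(σ_k^{-1}) = d_2^k b_1 b_2 d_1 b_2^{k-1}. -/
def SigInv (k : ℕ) : Word := d 2 ^ k * b 1 * b 2 * d 1 * b 2 ^ (k-1)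
/-- φ(τ_k) = d_2^k x_2 b_2^k. -/
def Tau (k : ℕ) : Word := d 2 ^ k * x 2 * b 2 ^ k


namespace SKP

abbrev M := skCon.Quotient

def π : Word →* M := skCon.mk'

lemma rel {u v : Word} (h : SKRel u v) : π u = π v :=
  (skCon.eq).mpr (ConGen.Rel.of u v h)

-- index normalization in ZMod 3
lemma z01 : (0 : ZMod 3) + 1 = 1 := by decide
lemma z0m : (0 : ZMod 3) - 1 = 2 := by decide
lemma z11 : (1 : ZMod 3) + 1 = 2 := by decide
lemma z1m : (1 : ZMod 3) - 1 = 0 := by decide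
lemma z21 : (2 : ZMod 3) + 1 = 0 := by decide
lemma z2m : (2 : ZMod 3) - 1 = 1 := by decide

noncomputable def A0 : M := π (a 0)
noncomputable def B0 : M := π (b 0)
noncomputable def C0 : M := π (c 0)
noncomputable def D0 : M := π (d 0)
noncomputable def X0 : M := π (x 0)
noncomputable def β : M := π (b 2)
noncomputable def δ : M := π (d 2)

lemma bd0 : B0 * D0 = 1 := by
  have h := rel (SKRel.r4bd 0); simpa [map_mul, B0, D0] using h
lemma db0 : D0 * B0 = 1 := by
  have h := rel (SKRel.r4db 0); simpa [map_mul, B0, D0] using h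
lemma bd2 : β * δ = 1 := by
  have h := rel (SKRel.r4bd 2); simpa [map_mul, β, δ] using h
lemma db2 : δ * β = 1 := by
  have h := rel (SKRel.r4db 2); simpa [map_mul, β, δ] using h
lemma bd1 : π (b 1) * π (d 1) = 1 := by
  have h := rel (SKRel.r4bd 1); simpa [map_mul] using h
lemma db1 : π (d 1) * π (b 1) = 1 := by
  have h := rel (SKRel.r4db 1); simpa [map_mul] using h

@[simp] lemma bd0' (g : M) : B0 * (D0 * g) = g := by rw [← mul_assoc, bd0, one_mul]
@[simp] lemma db0' (g : M) : D0 * (B0 * g) = g := by rw [← mul_assoc, db0, one_mul]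
@[simp] lemma bd2' (g : M) : β * (δ * g) = g := by rw [← mul_assoc, bd2, one_mul]
@[simp] lemma db2' (g : M) : δ * (β * g) = g := by rw [← mul_assoc, db2, one_mul]
@[simp] lemma bd0'' : B0 * D0 = 1 := bd0
@[simp] lemma db0'' : D0 * B0 = 1 := db0
@[simp] lemma bd2'' : β * δ = 1 := bd2
@[simp] lemma db2'' : δ * β = 1 := db2

/-- the shift endomorphism g ↦ β g δ -/
noncomputable def Sh : M →* M where
  toFun g := β * (g * δ)
  map_one' := by simp
  map_mul' g h := by simp [mul_assoc]

lemma Sh_apply (g : M) : Sh g = β * (g * δ) := rfl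

@[simp] lemma Sh_delta : Sh δ = δ := by simp [Sh_apply]
@[simp] lemma Sh_beta : Sh β = β := by simp [Sh_apply, ← mul_assoc, bd2]

lemma delta_shift (g : M) : g * δ = δ * Sh g := by simp [Sh_apply, ← mul_assoc, db2]
lemma beta_shift (g : M) : β * g = Sh g * β := by simp [Sh_apply, mul_assoc]

/-- iterated shift -/
noncomputable def ShI : ℕ → (M →* M)
  | 0 => MonoidHom.id M
  | (n+1) => Sh.comp (ShI n)

@[simp] lemma ShI_zero (g : M) : ShI 0 g = g := rfl
lemma ShI_succ (n : ℕ) (g : M) : ShI (n+1) g = Sh (ShI n g) := rfl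

lemma ShI_Sh (n : ℕ) (g : M) : ShI n (Sh g) = Sh (ShI n g) := by
  induction n with
  | zero => rfl
  | succ n ih => rw [ShI_succ, ih, ShI_succ]

lemma ShI_add (m n : ℕ) (g : M) : ShI (m + n) g = ShI m (ShI n g) := by
  induction m with
  | zero => simp
  | succ m ih => rw [Nat.succ_add, ShI_succ, ShI_succ, ih]

@[simp] lemma ShI_delta (n : ℕ) : ShI n δ = δ := by
  induction n with
  | zero => rfl
  | succ n ih => rw [ShI_succ, ih, Sh_delta]

@[simp] lemma ShI_beta (n : ℕ) : ShI n β = β := by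
  induction n with
  | zero => rfl
  | succ n ih => rw [ShI_succ, ih, Sh_beta]

lemma delta_pow_shift (j : ℕ) (g : M) : g * δ^j = δ^j * ShI j g := by
  induction j with
  | zero => simp
  | succ j ih =>
      rw [pow_succ, ← mul_assoc, ih, mul_assoc, delta_shift]
      simp [ShI_succ, pow_succ, mul_assoc]

lemma beta_pow_shift (j : ℕ) (g : M) : β^j * g = ShI j g * β^j := by
  induction j with
  | zero => simp
  | succ j ih =>
      rw [pow_succ', mul_assoc, ih, ← mul_assoc, beta_shift]
      simp [ShI_succ, pow_succ', mul_assoc]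

lemma beta_pow_delta_pow (i j : ℕ) : β^i * δ^(i+j) = δ^j := by
  induction i with
  | zero => simp
  | succ i ih =>
      rw [pow_succ, Nat.succ_add, pow_succ']
      rw [mul_assoc, ← mul_assoc β, bd2, one_mul, ih]

lemma beta_pow_delta_pow' (i j : ℕ) : β^(i+j) * δ^i = β^j := by
  induction i with
  | zero => simp
  | succ i ih =>
      rw [Nat.succ_add, pow_succ, pow_succ', mul_assoc, ← mul_assoc β δ, bd2, one_mul, ih]

end SKP

namespace SKP

/-- the shifted families -/
noncomputable def Dm (j : ℕ) : M := ShI j D0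
noncomputable def Bm (j : ℕ) : M := ShI j B0
noncomputable def Cm (j : ℕ) : M := ShI j C0
noncomputable def Xm (j : ℕ) : M := ShI j X0
noncomputable def Am (j : ℕ) : M := ShI j A0
noncomputable def Qc (j : ℕ) : M := ShI j (D0 * C0)
noncomputable def Qa (j : ℕ) : M := ShI j (A0 * B0)
noncomputable def Qt (j : ℕ) : M := ShI j (Sh D0 * B0)
noncomputable def Qx (j : ℕ) : M := ShI j (D0 * X0 * B0)

lemma Dm_zero : Dm 0 = D0 := rfl
lemma Bm_zero : Bm 0 = B0 := rfl
lemma Dm_succ (j : ℕ) : Dm (j+1) = Sh (Dm j) := by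
  simp [Dm, ShI_succ]
lemma Bm_succ (j : ℕ) : Bm (j+1) = Sh (Bm j) := by
  simp [Bm, ShI_succ]
lemma Cm_succ (j : ℕ) : Cm (j+1) = Sh (Cm j) := by
  simp [Cm, ShI_succ]
lemma Xm_succ (j : ℕ) : Xm (j+1) = Sh (Xm j) := by
  simp [Xm, ShI_succ]
lemma Am_succ (j : ℕ) : Am (j+1) = Sh (Am j) := by
  simp [Am, ShI_succ]
lemma Qc_succ (j : ℕ) : Qc (j+1) = Sh (Qc j) := by
  simp [Qc, ShI_succ]
lemma Qa_succ (j : ℕ) : Qa (j+1) = Sh (Qa j) := by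
  simp [Qa, ShI_succ]
lemma Qt_succ (j : ℕ) : Qt (j+1) = Sh (Qt j) := by
  simp [Qt, ShI_succ]
lemma Qx_succ (j : ℕ) : Qx (j+1) = Sh (Qx j) := by
  simp [Qx, ShI_succ]

lemma ShI_Dm (n j : ℕ) : ShI n (Dm j) = Dm (n + j) := by rw [Dm, Dm, ← ShI_add]
lemma ShI_Bm (n j : ℕ) : ShI n (Bm j) = Bm (n + j) := by rw [Bm, Bm, ← ShI_add]
lemma ShI_Cm (n j : ℕ) : ShI n (Cm j) = Cm (n + j) := by rw [Cm, Cm, ← ShI_add]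
lemma ShI_Xm (n j : ℕ) : ShI n (Xm j) = Xm (n + j) := by rw [Xm, Xm, ← ShI_add]
lemma ShI_Am (n j : ℕ) : ShI n (Am j) = Am (n + j) := by rw [Am, Am, ← ShI_add]
lemma ShI_Qc (n j : ℕ) : ShI n (Qc j) = Qc (n + j) := by rw [Qc, Qc, ← ShI_add]
lemma ShI_Qa (n j : ℕ) : ShI n (Qa j) = Qa (n + j) := by rw [Qa, Qa, ← ShI_add]
lemma ShI_Qt (n j : ℕ) : ShI n (Qt j) = Qt (n + j) := by rw [Qt, Qt, ← ShI_add]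
lemma ShI_Qx (n j : ℕ) : ShI n (Qx j) = Qx (n + j) := by rw [Qx, Qx, ← ShI_add]

lemma Qc_eq (j : ℕ) : Qc j = Dm j * Cm j := by simp [Qc, Dm, Cm, map_mul]
lemma Qa_eq (j : ℕ) : Qa j = Am j * Bm j := by simp [Qa, Am, Bm, map_mul]
lemma Qt_eq (j : ℕ) : Qt j = Dm (j+1) * Bm j := by
  have : Dm (j+1) = ShI j (Sh D0) := by rw [Dm, ShI_Sh, ← ShI_succ, ← Dm]
  simp [Qt, Bm, map_mul, this]
lemma Qx_eq (j : ℕ) : Qx j = Dm j * Xm j * Bm j := by simp [Qx, Dm, Xm, Bm, map_mul]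

lemma Dm_one : Dm 1 = β * (D0 * δ) := by simp [Dm, ShI_succ, Sh_apply, mul_assoc]
lemma Bm_one : Bm 1 = β * (B0 * δ) := by simp [Bm, ShI_succ, Sh_apply, mul_assoc]

lemma DmBm (j : ℕ) : Dm j * Bm j = 1 := by
  induction j with
  | zero => exact db0
  | succ j ih => rw [Dm_succ, Bm_succ, ← map_mul, ih, map_one]
lemma BmDm (j : ℕ) : Bm j * Dm j = 1 := by
  induction j with
  | zero => exact bd0
  | succ j ih => rw [Dm_succ, Bm_succ, ← map_mul, ih, map_one]

@[simp] lemma DmBm' (j : ℕ) (g : M) : Dm j * (Bm j * g) = g := by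
  rw [← mul_assoc, DmBm, one_mul]
@[simp] lemma BmDm' (j : ℕ) (g : M) : Bm j * (Dm j * g) = g := by
  rw [← mul_assoc, BmDm, one_mul]
@[simp] lemma DmBm'' (j : ℕ) : Dm j * Bm j = 1 := DmBm j
@[simp] lemma BmDm'' (j : ℕ) : Bm j * Dm j = 1 := BmDm j

end SKP

namespace SKP

lemma A0d : π (a 0) = A0 := rfl
lemma B0d : π (b 0) = B0 := rfl
lemma C0d : π (c 0) = C0 := rfl
lemma D0d : π (d 0) = D0 := rfl
lemma X0d : π (x 0) = X0 := rfl
lemma b2d : π (b 2) = β := rfl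
lemma d2d : π (d 2) = δ := rfl

lemma db1' (g : M) : π (d 1) * (π (b 1) * g) = g := by rw [← mul_assoc, db1, one_mul]
lemma bd1' (g : M) : π (b 1) * (π (d 1) * g) = g := by rw [← mul_assoc, bd1, one_mul]

lemma L_b1 : π (b 1) = δ * D0 := by
  have h3 : D0 * (π (d 1) * δ) = 1 := by
    simpa [map_mul, mul_assoc, D0d, d2d] using rel SKRel.r3
  have key : δ * (D0 * π (d 1)) = 1 := by
    have h := congrArg (fun g => δ * (g * β)) h3
    simpa [mul_assoc] using h
  have h2 : π (b 1) = (δ * (D0 * π (d 1))) * π (b 1) := by rw [key, one_mul]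
  rw [h2]
  simp [mul_assoc, db1]

lemma L_d1 : π (d 1) = B0 * β := by
  have h3 : D0 * (π (d 1) * δ) = 1 := by
    simpa [map_mul, mul_assoc, D0d, d2d] using rel SKRel.r3
  have key2 : π (d 1) * (δ * D0) = 1 := by
    have h := congrArg (fun g => B0 * (g * D0)) h3
    simpa [mul_assoc] using h
  have h := congrArg (· * (B0 * β)) key2
  simpa [mul_assoc] using h

lemma L_a2 : π (a 2) = A0 * (B0 * β) := by
  have h := rel (SKRel.r1a 2)
  simp only [z21, z2m, map_mul, A0d] at h
  rw [h, L_d1]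

lemma L_a1 : π (a 1) = A0 * (B0 * (β * D0)) := by
  have h := rel (SKRel.r1a 1)
  simp only [z11, z1m, map_mul, D0d] at h
  rw [h, L_a2]
  simp [mul_assoc]

lemma L_c2 : π (c 2) = δ * (D0 * C0) := by
  have h := rel (SKRel.r1c 2)
  simp only [z21, z2m, map_mul, C0d] at h
  rw [h, L_b1, mul_assoc]

lemma L_c0 : C0 = β * π (c 1) := by
  have h := rel (SKRel.r1c 0)
  simpa [z01, z0m, (by decide : (-1 : ZMod 3) = 2), map_mul, C0d, b2d] using h

lemma L_c1 : π (c 1) = B0 * π (c 2) := by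
  have h := rel (SKRel.r1c 1)
  simpa [z11, z1m, map_mul, B0d] using h

lemma L_x1 : π (x 1) = δ * (X0 * β) := by
  have h := rel (SKRel.r2 1)
  simp only [z11, z1m, map_mul, X0d, b2d, d2d] at h
  rw [h, mul_assoc]

lemma L_x2 : π (x 2) = D0 * (π (x 1) * B0) := by
  have h := rel (SKRel.r2 2)
  simp only [z21, z2m, map_mul, B0d, D0d] at h
  rw [h, mul_assoc]

lemma L_x0 : X0 = π (d 1) * (π (x 2) * π (b 1)) := by
  have h := rel (SKRel.r2 0)
  simpa [z01, z0m, (by decide : (-1 : ZMod 3) = 2), map_mul, X0d, mul_assoc] using h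

lemma L_d2a : δ = A0 * π (c 1) := by
  have h := rel (SKRel.r1d 2)
  simpa [z21, z2m, map_mul, A0d, d2d] using h

lemma L_d0a : D0 = π (a 1) * π (c 2) := by
  have h := rel (SKRel.r1d 0)
  simpa [z01, z0m, (by decide : (-1 : ZMod 3) = 2), map_mul, D0d] using h

/-- key: the conjugation identity for x (relation R-x). -/
lemma Rx : D0 * (X0 * B0) = Dm 1 * (X0 * Bm 1) := by
  conv_lhs => rw [L_x0, L_x2, L_x1, L_d1, L_b1]
  simp [mul_assoc, Dm_one, Bm_one]

/-- the element F = a1 b1, commuting with all the cores. -/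
noncomputable def Fel : M := π (a 1) * π (b 1)

lemma F_eq : Fel = A0 * (B0 * (Dm 1 * D0)) := by
  rw [Fel, L_a1, L_b1, Dm_one]
  simp [mul_assoc]

lemma F_beta : Fel * β = β * Fel := by
  have h := rel (SKRel.r8 1 (b 2) (by simp [z11]))
  simpa [Fel, map_mul, mul_assoc, b2d] using h

lemma F_Sh : Sh Fel = Fel := by
  rw [Sh_apply, ← mul_assoc, ← F_beta, mul_assoc, bd2, mul_one]

lemma F_delta : Fel * δ = δ * Fel := by rw [delta_shift, F_Sh]

lemma ShI_F (n : ℕ) : ShI n Fel = Fel := by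
  induction n with
  | zero => rfl
  | succ n ih => rw [ShI_succ, ih, F_Sh]

lemma F_Qc : Fel * (D0 * C0) = D0 * (C0 * Fel) := by
  have h := rel (SKRel.r8 1 (c 2) (by simp [z11]))
  have h2 : Fel * (δ * (D0 * C0)) = δ * (D0 * (C0 * Fel)) := by
    simpa [Fel, map_mul, mul_assoc, L_c2] using h
  have h1 : δ * (Fel * (D0 * C0)) = δ * (D0 * (C0 * Fel)) := by
    calc δ * (Fel * (D0 * C0)) = (Fel * δ) * (D0 * C0) := by
          rw [F_delta, mul_assoc]
    _ = δ * (D0 * (C0 * Fel)) := by rw [mul_assoc]; exact h2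
  simpa using congrArg (β * ·) h1

lemma F_Qa : Fel * (A0 * B0) = A0 * (B0 * Fel) := by
  have h := rel (SKRel.r8 1 (a 2) (by simp [z11]))
  have h2 : Fel * (A0 * (B0 * β)) = A0 * (B0 * (β * Fel)) := by
    simpa [Fel, map_mul, mul_assoc, L_a2] using h
  have h3 := congrArg (· * δ) h2
  simpa [mul_assoc, F_delta] using h3

lemma F_C : Fel * C0 = D0 := by
  have e1 : π (b 1) * C0 = π (c 2) := by
    have h := rel (SKRel.r1c 2)
    simp only [z21, z2m, map_mul, C0d] at h
    exact h.symm
  have e2 : π (a 1) * π (c 2) = D0 := by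
    have h := rel (SKRel.r1d 0)
    simp only [z01, z0m, map_mul, D0d] at h
    exact h.symm
  rw [Fel, mul_assoc, e1, e2]

end SKP

namespace SKP

lemma Qc0_eq : Qc 0 = D0 * C0 := by simp [Qc]
lemma Qa0_eq : Qa 0 = A0 * B0 := by simp [Qa]
lemma Qt0_eq : Qt 0 = Dm 1 * B0 := by simp [Qt, Dm, ShI_succ]
lemma Qx0_eq : Qx 0 = D0 * (X0 * B0) := by simp [Qx, mul_assoc]

lemma c1_eq : π (c 1) = δ * C0 := by
  have := congrArg (δ * ·) L_c0
  simpa using this.symm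

-- framed helper lemmas for the c-shift chain
lemma fr8_c1 (g : M) : π (c 1) * (A0 * (B0 * g)) = A0 * (B0 * (π (c 1) * g)) := by
  have h : A0 * (B0 * π (c 1)) = π (c 1) * (A0 * B0) := by
    simpa [map_mul, mul_assoc, A0d, B0d, z01] using rel (SKRel.r8 0 (c 1) (by simp [z01]))
  calc π (c 1) * (A0 * (B0 * g)) = (π (c 1) * (A0 * B0)) * g := by simp [mul_assoc]
  _ = (A0 * (B0 * π (c 1))) * g := by rw [← h]
  _ = A0 * (B0 * (π (c 1) * g)) := by simp [mul_assoc]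

lemma fr8_b1 (g : M) : A0 * (B0 * (π (b 1) * g)) = π (b 1) * (A0 * (B0 * g)) := by
  have h : A0 * (B0 * π (b 1)) = π (b 1) * (A0 * B0) := by
    simpa [map_mul, mul_assoc, A0d, B0d, z01] using rel (SKRel.r8 0 (b 1) (by simp [z01]))
  calc A0 * (B0 * (π (b 1) * g)) = (A0 * (B0 * π (b 1))) * g := by simp [mul_assoc]
  _ = (π (b 1) * (A0 * B0)) * g := by rw [h]
  _ = π (b 1) * (A0 * (B0 * g)) := by simp [mul_assoc]

lemma e7 : π (d 1) * (π (c 1) * π (c 2)) = π (c 2) * (π (d 1) * π (c 1)) := by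
  simpa [map_mul, mul_assoc, z11] using rel (SKRel.r7 1 (c 2) (by simp [z11]))

lemma frc1 (g : M) : B0 * (π (c 2) * g) = π (c 1) * g := by
  rw [← mul_assoc, ← L_c1]

lemma frd2 (g : M) : A0 * (π (c 1) * g) = δ * g := by
  rw [← mul_assoc, ← L_d2a]

/-- the main "shift of c" identity:  c0 d2 = d0 d2 b0 c0. -/
lemma hc : C0 * δ = D0 * (δ * (B0 * C0)) := by
  conv_lhs => rw [L_c0]
  rw [mul_assoc]
  conv_lhs => rw [L_d2a]
  nth_rewrite 2 [L_c1]
  rw [fr8_c1]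
  rw [show π (c 1) * π (c 2) = π (b 1) * (π (d 1) * (π (c 1) * π (c 2))) from (bd1' _).symm]
  rw [e7, fr8_b1, frc1, frd2, L_b1, L_d1, c1_eq]
  simp [mul_assoc]

lemma C1eq : Sh C0 = Dm 1 * (B0 * C0) := by
  rw [Sh_apply, hc, Dm_one]
  simp [mul_assoc]

-- cancellation / shifting helpers
lemma cancel_dd {P Q : M} (h : δ * (δ * P) = δ * (δ * Q)) : P = Q := by
  have := congrArg (fun g => β * (β * g)) h
  simpa using this

lemma cancel_right_bb {P Q : M} (h : P * (β * β) = Q * (β * β)) : P = Q := by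
  have := congrArg (fun g => g * (δ * δ)) h
  simpa [mul_assoc] using this

lemma two_beta_shift (W : M) : β * (β * W) = Sh (Sh W) * (β * β) := by
  rw [beta_shift W, ← mul_assoc, beta_shift (Sh W), mul_assoc]

lemma two_delta_shift (W : M) : W * (δ * δ) = δ * (δ * Sh (Sh W)) := by
  rw [← mul_assoc, delta_shift W, mul_assoc, delta_shift (Sh W)]

lemma bridgeL {Z W : M} (h : δ * (δ * (Z * W)) = W * (δ * (δ * Z))) :
    Z * W = Sh (Sh W) * Z := by
  apply cancel_dd
  calc δ * (δ * (Z * W)) = W * (δ * (δ * Z)) := h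
  _ = (W * (δ * δ)) * Z := by simp [mul_assoc]
  _ = (δ * (δ * Sh (Sh W))) * Z := by rw [two_delta_shift]
  _ = δ * (δ * (Sh (Sh W) * Z)) := by simp [mul_assoc]

lemma bridgeR {Z W : M} (h : Z * (β * (β * W)) = W * (Z * (β * β))) :
    Z * Sh (Sh W) = W * Z := by
  apply cancel_right_bb
  calc Z * Sh (Sh W) * (β * β) = Z * (Sh (Sh W) * (β * β)) := by rw [mul_assoc]
  _ = Z * (β * (β * W)) := by rw [← two_beta_shift]
  _ = W * (Z * (β * β)) := h
  _ = W * Z * (β * β) := by rw [mul_assoc]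

-- the element u = b2 d0 d2
lemma u_eq : π (b 2 * d 0 * d 2) = Dm 1 := by
  simp [map_mul, mul_assoc, b2d, d2d, D0d, Dm_one]

-- ==== pack K_C : behaviour of Qc 0 (from r7 at i = 2) ====
lemma KC_c : Qc 0 * C0 = Sh (Sh C0) * Qc 0 := by
  apply bridgeL
  have h := rel (SKRel.r7 2 (c 0) (by simp [z21]))
  rw [Qc0_eq]
  simpa [map_mul, mul_assoc, L_c2, C0d, d2d] using h

lemma KC_x : Qc 0 * X0 = Sh (Sh X0) * Qc 0 := by
  apply bridgeL
  have h := rel (SKRel.r7 2 (x 0) (by simp [z21]))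
  rw [Qc0_eq]
  simpa [map_mul, mul_assoc, L_c2, X0d, d2d] using h

lemma KC_u : Qc 0 * Dm 1 = Sh (Sh (Dm 1)) * Qc 0 := by
  apply bridgeL
  have h := rel (SKRel.r7 2 (b 2 * d 0 * d 2) (by simp [z21]))
  rw [Qc0_eq, ← u_eq]
  simpa [map_mul, mul_assoc, L_c2, d2d] using h

-- ==== pack K_A : behaviour of Qa 0 (from r8 at i = 2) ====
lemma a2b2_eq : π (a 2) * π (b 2) = Qa 0 * (β * β) := by
  rw [L_a2, Qa0_eq, b2d]
  simp [mul_assoc]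

lemma KA (w : Word) (hw : w ∈ ({a (2+1 : ZMod 3), b (2+1 : ZMod 3), c (2+1 : ZMod 3),
    x (2+1 : ZMod 3), b 2 * d (2+1 : ZMod 3) * d 2} : Set Word)) :
    Qa 0 * Sh (Sh (π w)) = π w * Qa 0 := by
  apply bridgeR
  have h := rel (SKRel.r8 2 w hw)
  have h2 : (Qa 0 * (β * β)) * π w = π w * (Qa 0 * (β * β)) := by
    rw [← a2b2_eq]
    simpa [map_mul] using h
  calc Qa 0 * (β * (β * π w)) = (Qa 0 * (β * β)) * π w := by simp [mul_assoc]
  _ = π w * (Qa 0 * (β * β)) := h2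
  _ = π w * (Qa 0 * (β * β)) := rfl

lemma KA_a : Qa 0 * Sh (Sh A0) = A0 * Qa 0 := KA (a 0) (by simp [z21])
lemma KA_b : Qa 0 * Sh (Sh B0) = B0 * Qa 0 := KA (b 0) (by simp [z21])
lemma KA_c : Qa 0 * Sh (Sh C0) = C0 * Qa 0 := KA (c 0) (by simp [z21])
lemma KA_x : Qa 0 * Sh (Sh X0) = X0 * Qa 0 := KA (x 0) (by simp [z21])
lemma KA_u : Qa 0 * Sh (Sh (Dm 1)) = Dm 1 * Qa 0 := by
  have h := KA (b 2 * d 0 * d 2) (by simp [z21])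
  rwa [u_eq] at h

-- ==== pack K_T : behaviour of Qt 0 (from r9 at i = 0) ====
lemma zneg : (-1 : ZMod 3) = 2 := by decide

lemma t0_eq : π (t 0) = δ * (δ * (Qt 0 * (β * β))) := by
  simp [t, z01, z0m, zneg, map_mul, mul_assoc, b2d, d2d, B0d, L_b1, L_d1, Qt0_eq, Dm_one]

lemma ShI2_unconj (g : M) : ShI 2 (δ * (δ * (g * (β * β)))) = g := by
  have : ShI 2 (δ * (δ * (g * (β * β)))) =
      δ * (δ * (Sh (Sh (g)) * (β * β))) := by
    simp [map_mul, ShI_succ, ShI_Sh]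
  rw [this, ← two_beta_shift]
  simp

lemma ShI2_t0 : ShI 2 (π (t 0)) = Qt 0 := by rw [t0_eq]; exact ShI2_unconj _

lemma KT (w : Word) (hw : w ∈ ({a 0, b 0, c 0, x 0,
    b (0-1 : ZMod 3) * d 0 * d (0-1 : ZMod 3)} : Set Word)) :
    Qt 0 * ShI 2 (π w) = ShI 2 (π w) * Qt 0 := by
  have h := rel (SKRel.r9 0 w hw)
  have h2 := congrArg (ShI 2) h
  simpa [map_mul, ShI2_t0] using h2

lemma KT_a : Qt 0 * ShI 2 A0 = ShI 2 A0 * Qt 0 := KT (a 0) (by simp)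
lemma KT_b : Qt 0 * ShI 2 B0 = ShI 2 B0 * Qt 0 := KT (b 0) (by simp)
lemma KT_c : Qt 0 * ShI 2 C0 = ShI 2 C0 * Qt 0 := KT (c 0) (by simp)
lemma KT_x : Qt 0 * ShI 2 X0 = ShI 2 X0 * Qt 0 := KT (x 0) (by simp)
lemma KT_u : Qt 0 * ShI 2 (Dm 1) = ShI 2 (Dm 1) * Qt 0 := by
  have h := KT (b 2 * d 0 * d 2) (by simp [z0m, zneg])
  rwa [u_eq] at h

-- ==== pack K_X : behaviour of Qx 0 (from r10 at i = 2) ====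
lemma z5_eq : π (d 2 * x 2 * b 2) = δ * (δ * (Qx 0 * (β * β))) := by
  have hq : Qx 0 = Dm 1 * (X0 * Bm 1) := by rw [Qx0_eq]; exact Rx
  calc π (d 2 * x 2 * b 2) = δ * (D0 * (δ * (X0 * (β * (B0 * β))))) := by
        simp [map_mul, L_x2, L_x1, mul_assoc, d2d, b2d, B0d, D0d]
  _ = δ * (δ * ((Dm 1 * (X0 * Bm 1)) * (β * β))) := by
        simp [Dm_one, Bm_one, mul_assoc]
  _ = δ * (δ * (Qx 0 * (β * β))) := by rw [← hq]

lemma ShI2_z5 : ShI 2 (π (d 2 * x 2 * b 2)) = Qx 0 := by rw [z5_eq]; exact ShI2_unconj _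

lemma ShI2_z5' : ShI 2 (π (d 2)) * ShI 2 (π (x 2)) * ShI 2 (π (b 2)) = Qx 0 := by
  rw [← map_mul, ← map_mul, ← map_mul, ← map_mul]
  exact ShI2_z5

lemma KXp (w : Word) (hw : w ∈ ({a (2+1 : ZMod 3), b (2+1 : ZMod 3), c (2+1 : ZMod 3),
    x (2+1 : ZMod 3), b 2 * d (2+1 : ZMod 3) * d 2} : Set Word)) :
    Qx 0 * ShI 2 (π w) = ShI 2 (π w) * Qx 0 := by
  have h := rel (SKRel.r10 2 w hw)
  have h2 := congrArg (ShI 2) h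
  simp only [map_mul] at h2
  rw [ShI2_z5'] at h2
  exact h2

lemma KX_a : Qx 0 * ShI 2 A0 = ShI 2 A0 * Qx 0 := KXp (a 0) (by simp [z21])
lemma KX_b : Qx 0 * ShI 2 B0 = ShI 2 B0 * Qx 0 := KXp (b 0) (by simp [z21])
lemma KX_c : Qx 0 * ShI 2 C0 = ShI 2 C0 * Qx 0 := KXp (c 0) (by simp [z21])
lemma KX_x : Qx 0 * ShI 2 X0 = ShI 2 X0 * Qx 0 := KXp (x 0) (by simp [z21])
lemma KX_u : Qx 0 * ShI 2 (Dm 1) = ShI 2 (Dm 1) * Qx 0 := by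
  have h := KXp (b 2 * d 0 * d 2) (by simp [z21])
  rwa [u_eq] at h

end SKP

namespace SKP

lemma Dm_one' : Dm 1 = Sh D0 := by simpa [Dm_zero] using Dm_succ 0
lemma Bm_one' : Bm 1 = Sh B0 := by simpa [Bm_zero] using Bm_succ 0

lemma t1_eq : π (t 1) = Qt 0 := by
  simp [t, z11, z1m, map_mul, mul_assoc, b2d, d2d, D0d, B0d, Qt0_eq, Dm_one]

lemma QtrecB : Sh (Qt 0) = D0 * (Qt 0 * B0) := by
  have h2 : Qt 0 * (δ * D0) = δ * (D0 * Qt 0) := by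
    have h := rel (SKRel.r9 1 (b 1) (by simp))
    simpa [map_mul, t1_eq, L_b1, mul_assoc] using h
  have h3 : δ * (Sh (Qt 0) * D0) = δ * (D0 * Qt 0) := by
    rw [← mul_assoc, ← delta_shift, mul_assoc]; exact h2
  have h4 : Sh (Qt 0) * D0 = D0 * Qt 0 := by simpa using congrArg (β * ·) h3
  have h5 := congrArg (· * B0) h4
  simpa [mul_assoc] using h5

lemma QarecB : Sh (Qa 0) = D0 * (Qa 0 * B0) := by
  have h2 : Qa 0 * (δ * D0) = δ * (D0 * Qa 0) := by
    have h := rel (SKRel.r8 0 (b 1) (by simp [z01]))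
    rw [Qa0_eq]
    simpa [map_mul, L_b1, mul_assoc, A0d, B0d] using h
  have h3 : δ * (Sh (Qa 0) * D0) = δ * (D0 * Qa 0) := by
    rw [← mul_assoc, ← delta_shift, mul_assoc]; exact h2
  have h4 : Sh (Qa 0) * D0 = D0 * Qa 0 := by simpa using congrArg (β * ·) h3
  have h5 := congrArg (· * B0) h4
  simpa [mul_assoc] using h5

lemma QxrecB : Sh (Qx 0) = D0 * (Qx 0 * B0) := by
  have h2 : Qx 0 * (δ * D0) = δ * (D0 * Qx 0) := by
    have h := rel (SKRel.r10 0 (b 1) (by simp [z01]))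
    rw [Qx0_eq]
    simpa [map_mul, L_b1, mul_assoc, X0d, B0d, D0d] using h
  have h3 : δ * (Sh (Qx 0) * D0) = δ * (D0 * Qx 0) := by
    rw [← mul_assoc, ← delta_shift, mul_assoc]; exact h2
  have h4 : Sh (Qx 0) * D0 = D0 * Qx 0 := by simpa using congrArg (β * ·) h3
  have h5 := congrArg (· * B0) h4
  simpa [mul_assoc] using h5

lemma QcrecB : Sh (Qc 0) = Dm 1 * (Dm 1 * (B0 * (B0 * Qc 0))) := by
  have e : Sh (Qc 0) = Sh D0 * Sh C0 := by rw [Qc0_eq, map_mul]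
  rw [e, C1eq, ← Dm_one', Qc0_eq]
  simp [mul_assoc]

lemma DrecB : Dm 2 = D0 * (Dm 1 * (B0 * (B0 * Dm 1))) := by
  have e : Sh (Qt 0) = Dm 2 * Bm 1 := by
    rw [Qt0_eq, map_mul, ← Bm_one',
        ← show Dm 2 = Sh (Dm 1) from by simpa using Dm_succ 1]
  have h0 : Dm 2 * Bm 1 = D0 * (Dm 1 * (B0 * B0)) := by
    rw [← e, QtrecB, Qt0_eq]
    simp [mul_assoc]
  have h1 := congrArg (· * Dm 1) h0
  simpa [mul_assoc] using h1

lemma Qtrec (j : ℕ) : Qt (j+1) = Dm j * (Qt j * Bm j) := by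
  have h := congrArg (ShI j) QtrecB
  simpa [map_mul, ShI_Sh, ShI_Qt, ← Qt_succ, Dm, Bm] using h

lemma Qarec (j : ℕ) : Qa (j+1) = Dm j * (Qa j * Bm j) := by
  have h := congrArg (ShI j) QarecB
  simpa [map_mul, ShI_Sh, ShI_Qa, ← Qa_succ, Dm, Bm] using h

lemma Qxrec (j : ℕ) : Qx (j+1) = Dm j * (Qx j * Bm j) := by
  have h := congrArg (ShI j) QxrecB
  simpa [map_mul, ShI_Sh, ShI_Qx, ← Qx_succ, Dm, Bm] using h

lemma Qcrec (j : ℕ) : Qc (j+1) = Dm (j+1) * (Dm (j+1) * (Bm j * (Bm j * Qc j))) := by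
  have h := congrArg (ShI j) QcrecB
  have e1 : ShI j (Dm 1) = Dm (j+1) := by simpa [Nat.add_comm] using ShI_Dm j 1
  simpa [map_mul, ShI_Sh, ShI_Qc, ← Qc_succ, e1, Bm] using h

lemma Drec (j : ℕ) : Dm (j+2) = Dm j * (Dm (j+1) * (Bm j * (Bm j * Dm (j+1)))) := by
  have h := congrArg (ShI j) DrecB
  simp only [map_mul] at h
  rw [show ShI j (Dm 2) = Dm (j+2) from by simpa [Nat.add_comm] using ShI_Dm j 2,
      show ShI j (Dm 1) = Dm (j+1) from by simpa [Nat.add_comm] using ShI_Dm j 1] at h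
  exact h

-- ===== the four commutation classes =====

def Pc (g : M) : Prop := Qc 0 * g = Sh (Sh g) * Qc 0
def Pa (g : M) : Prop := Qa 0 * Sh (Sh g) = g * Qa 0
def Pt (g : M) : Prop := Qt 0 * g = g * Qt 0
def Px (g : M) : Prop := Qx 0 * g = g * Qx 0

lemma comm_inv {z g h : M} (hgh : g * h = 1) (hhg : h * g = 1)
    (hg : z * g = g * z) : z * h = h * z := by
  calc z * h = (h * g) * (z * h) := by rw [hhg, one_mul]
  _ = h * ((g * z) * h) := by simp [mul_assoc]
  _ = h * ((z * g) * h) := by rw [hg]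
  _ = h * (z * (g * h)) := by rw [mul_assoc]
  _ = h * z := by rw [hgh, mul_one]

lemma Pc_mul {g h : M} (hg : Pc g) (hh : Pc h) : Pc (g * h) := by
  unfold Pc at *
  rw [map_mul, map_mul]
  calc Qc 0 * (g * h) = (Qc 0 * g) * h := (mul_assoc _ _ _).symm
  _ = (Sh (Sh g) * Qc 0) * h := by rw [hg]
  _ = Sh (Sh g) * (Qc 0 * h) := mul_assoc _ _ _
  _ = Sh (Sh g) * (Sh (Sh h) * Qc 0) := by rw [hh]
  _ = Sh (Sh g) * Sh (Sh h) * Qc 0 := (mul_assoc _ _ _).symm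

lemma Pc_inv {g h : M} (hgh : g * h = 1) (hhg : h * g = 1) (hg : Pc g) : Pc h := by
  unfold Pc at *
  have e1 : Sh (Sh h) * Sh (Sh g) = 1 := by
    rw [← map_mul, ← map_mul, hhg, map_one, map_one]
  calc Qc 0 * h = (Sh (Sh h) * Sh (Sh g)) * (Qc 0 * h) := by rw [e1, one_mul]
  _ = Sh (Sh h) * ((Sh (Sh g) * Qc 0) * h) := by simp [mul_assoc]
  _ = Sh (Sh h) * ((Qc 0 * g) * h) := by rw [← hg]
  _ = Sh (Sh h) * (Qc 0 * (g * h)) := by rw [mul_assoc]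
  _ = Sh (Sh h) * Qc 0 := by rw [hgh, mul_one]

lemma Pa_mul {g h : M} (hg : Pa g) (hh : Pa h) : Pa (g * h) := by
  unfold Pa at *
  rw [map_mul, map_mul]
  calc Qa 0 * (Sh (Sh g) * Sh (Sh h)) = (Qa 0 * Sh (Sh g)) * Sh (Sh h) := (mul_assoc _ _ _).symm
  _ = (g * Qa 0) * Sh (Sh h) := by rw [hg]
  _ = g * (Qa 0 * Sh (Sh h)) := mul_assoc _ _ _
  _ = g * (h * Qa 0) := by rw [hh]
  _ = g * h * Qa 0 := (mul_assoc _ _ _).symm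

lemma Pa_inv {g h : M} (hgh : g * h = 1) (hhg : h * g = 1) (hg : Pa g) : Pa h := by
  unfold Pa at *
  calc Qa 0 * Sh (Sh h) = (h * g) * (Qa 0 * Sh (Sh h)) := by rw [hhg, one_mul]
  _ = h * ((g * Qa 0) * Sh (Sh h)) := by simp [mul_assoc]
  _ = h * ((Qa 0 * Sh (Sh g)) * Sh (Sh h)) := by rw [hg]
  _ = h * (Qa 0 * (Sh (Sh g) * Sh (Sh h))) := by rw [mul_assoc]
  _ = h * (Qa 0 * Sh (Sh (g * h))) := by rw [map_mul, map_mul]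
  _ = h * Qa 0 := by rw [hgh, map_one, map_one, mul_one]

lemma Pt_mul {g h : M} (hg : Pt g) (hh : Pt h) : Pt (g * h) := by
  unfold Pt at *
  calc Qt 0 * (g * h) = (Qt 0 * g) * h := (mul_assoc _ _ _).symm
  _ = (g * Qt 0) * h := by rw [hg]
  _ = g * (Qt 0 * h) := mul_assoc _ _ _
  _ = g * (h * Qt 0) := by rw [hh]
  _ = g * h * Qt 0 := (mul_assoc _ _ _).symm

lemma Pt_inv {g h : M} (hgh : g * h = 1) (hhg : h * g = 1) (hg : Pt g) : Pt h :=
  comm_inv hgh hhg hg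

lemma Px_mul {g h : M} (hg : Px g) (hh : Px h) : Px (g * h) := by
  unfold Px at *
  calc Qx 0 * (g * h) = (Qx 0 * g) * h := (mul_assoc _ _ _).symm
  _ = (g * Qx 0) * h := by rw [hg]
  _ = g * (Qx 0 * h) := mul_assoc _ _ _
  _ = g * (h * Qx 0) := by rw [hh]
  _ = g * h * Qx 0 := (mul_assoc _ _ _).symm

lemma Px_inv {g h : M} (hgh : g * h = 1) (hhg : h * g = 1) (hg : Px g) : Px h :=
  comm_inv hgh hhg hg

-- ===== memberships in Pc =====

lemma FBB : Fel * (B0 * Bm 1) = Qa 0 := by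
  rw [F_eq, Qa0_eq]
  simp [mul_assoc]

lemma F_Qc' : Qc 0 * Fel = Fel * Qc 0 := by
  rw [Qc0_eq]
  simpa [mul_assoc] using F_Qc.symm

lemma F_Qa' : Qa 0 * Fel = Fel * Qa 0 := by
  rw [Qa0_eq]
  simpa [mul_assoc] using F_Qa.symm

lemma Pc_C0 : Pc C0 := KC_c
lemma Pc_X0 : Pc X0 := KC_x
lemma Pc_D1 : Pc (Dm 1) := KC_u
lemma Pc_F : Pc Fel := by unfold Pc; rw [F_Sh, F_Sh]; exact F_Qc'
lemma Pc_D0 : Pc D0 := by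
  have h := Pc_mul Pc_F Pc_C0
  rwa [F_C] at h
lemma Pc_DD : ∀ j : ℕ, Pc (Dm j) ∧ Pc (Dm (j+1))
  | 0 => ⟨Pc_D0, Pc_D1⟩
  | (j+1) => by
      obtain ⟨h1, h2⟩ := Pc_DD j
      refine ⟨h2, ?_⟩
      have hb : Pc (Bm j) := Pc_inv (DmBm j) (BmDm j) h1
      show Pc (Dm (j+2))
      rw [Drec j]
      exact Pc_mul h1 (Pc_mul h2 (Pc_mul hb (Pc_mul hb h2)))
lemma Pc_Dm (j : ℕ) : Pc (Dm j) := (Pc_DD j).1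
lemma Pc_Bm (j : ℕ) : Pc (Bm j) := Pc_inv (DmBm j) (BmDm j) (Pc_Dm j)
lemma Pc_Qc : ∀ j : ℕ, Pc (Qc j)
  | 0 => by rw [Qc0_eq]; exact Pc_mul Pc_D0 Pc_C0
  | (j+1) => by
      rw [Qcrec j]
      exact Pc_mul (Pc_Dm _) (Pc_mul (Pc_Dm _) (Pc_mul (Pc_Bm _) (Pc_mul (Pc_Bm _) (Pc_Qc j))))
lemma Pc_Qa : ∀ j : ℕ, Pc (Qa j)
  | 0 => by
      rw [← FBB]
      exact Pc_mul Pc_F (Pc_mul (Pc_Bm 0) (Pc_Bm 1))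
  | (j+1) => by
      rw [Qarec j]
      exact Pc_mul (Pc_Dm _) (Pc_mul (Pc_Qa j) (Pc_Bm _))
lemma Pc_Qx : ∀ j : ℕ, Pc (Qx j)
  | 0 => by
      rw [show Qx 0 = Dm 1 * (X0 * Bm 1) from Qx0_eq.trans Rx]
      exact Pc_mul Pc_D1 (Pc_mul Pc_X0 (Pc_Bm 1))
  | (j+1) => by
      rw [Qxrec j]
      exact Pc_mul (Pc_Dm _) (Pc_mul (Pc_Qx j) (Pc_Bm _))
lemma Pc_Qt (j : ℕ) : Pc (Qt j) := by
  rw [Qt_eq]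
  exact Pc_mul (Pc_Dm _) (Pc_Bm _)

-- ===== memberships in Pa =====

lemma Pa_C0 : Pa C0 := KA_c
lemma Pa_X0 : Pa X0 := KA_x
lemma Pa_B0 : Pa B0 := KA_b
lemma Pa_D1 : Pa (Dm 1) := KA_u
lemma Pa_F : Pa Fel := by unfold Pa; rw [F_Sh, F_Sh]; exact F_Qa'
lemma Pa_D0 : Pa D0 := by
  have h := Pa_mul Pa_F Pa_C0
  rwa [F_C] at h
lemma Pa_DD : ∀ j : ℕ, Pa (Dm j) ∧ Pa (Dm (j+1))
  | 0 => ⟨Pa_D0, Pa_D1⟩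
  | (j+1) => by
      obtain ⟨h1, h2⟩ := Pa_DD j
      refine ⟨h2, ?_⟩
      have hb : Pa (Bm j) := Pa_inv (DmBm j) (BmDm j) h1
      show Pa (Dm (j+2))
      rw [Drec j]
      exact Pa_mul h1 (Pa_mul h2 (Pa_mul hb (Pa_mul hb h2)))
lemma Pa_Dm (j : ℕ) : Pa (Dm j) := (Pa_DD j).1
lemma Pa_Bm (j : ℕ) : Pa (Bm j) := Pa_inv (DmBm j) (BmDm j) (Pa_Dm j)
lemma Pa_Qc : ∀ j : ℕ, Pa (Qc j)
  | 0 => by rw [Qc0_eq]; exact Pa_mul Pa_D0 Pa_C0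
  | (j+1) => by
      rw [Qcrec j]
      exact Pa_mul (Pa_Dm _) (Pa_mul (Pa_Dm _) (Pa_mul (Pa_Bm _) (Pa_mul (Pa_Bm _) (Pa_Qc j))))
lemma Pa_Qa : ∀ j : ℕ, Pa (Qa j)
  | 0 => by
      rw [← FBB]
      exact Pa_mul Pa_F (Pa_mul (Pa_Bm 0) (Pa_Bm 1))
  | (j+1) => by
      rw [Qarec j]
      exact Pa_mul (Pa_Dm _) (Pa_mul (Pa_Qa j) (Pa_Bm _))
lemma Pa_Qx : ∀ j : ℕ, Pa (Qx j)
  | 0 => by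
      rw [show Qx 0 = Dm 1 * (X0 * Bm 1) from Qx0_eq.trans Rx]
      exact Pa_mul Pa_D1 (Pa_mul Pa_X0 (Pa_Bm 1))
  | (j+1) => by
      rw [Qxrec j]
      exact Pa_mul (Pa_Dm _) (Pa_mul (Pa_Qx j) (Pa_Bm _))
lemma Pa_Qt (j : ℕ) : Pa (Qt j) := by
  rw [Qt_eq]
  exact Pa_mul (Pa_Dm _) (Pa_Bm _)

-- ===== memberships in Pt =====

lemma ShI2_Dm1 : ShI 2 (Dm 1) = Dm 3 := by simpa using ShI_Dm 2 1

lemma Pt_A2 : Pt (Am 2) := KT_a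
lemma Pt_B2 : Pt (Bm 2) := KT_b
lemma Pt_C2 : Pt (Cm 2) := KT_c
lemma Pt_X2 : Pt (Xm 2) := KT_x
lemma Pt_D3 : Pt (Dm 3) := by have h := KT_u; rwa [ShI2_Dm1] at h
lemma Pt_D2 : Pt (Dm 2) := Pt_inv (BmDm 2) (DmBm 2) Pt_B2
lemma Pt_DD : ∀ j : ℕ, Pt (Dm (j+2)) ∧ Pt (Dm (j+3))
  | 0 => ⟨Pt_D2, Pt_D3⟩
  | (j+1) => by
      obtain ⟨h1, h2⟩ := Pt_DD j
      refine ⟨h2, ?_⟩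
      have hb : Pt (Bm (j+2)) := Pt_inv (DmBm (j+2)) (BmDm (j+2)) h1
      show Pt (Dm (j+4))
      rw [show (j+4) = (j+2)+2 from by omega, Drec (j+2),
          show (j+2)+1 = j+3 from by omega]
      exact Pt_mul h1 (Pt_mul h2 (Pt_mul hb (Pt_mul hb h2)))
lemma Pt_Dm (j : ℕ) : Pt (Dm (j+2)) := (Pt_DD j).1
lemma Pt_Bm (j : ℕ) : Pt (Bm (j+2)) := Pt_inv (DmBm (j+2)) (BmDm (j+2)) (Pt_Dm j)
lemma Pt_Qc : ∀ j : ℕ, Pt (Qc (j+2))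
  | 0 => by
      rw [Qc_eq 2]
      exact Pt_mul Pt_D2 Pt_C2
  | (j+1) => by
      show Pt (Qc (j+3))
      rw [show (j+3) = (j+2)+1 from by omega, Qcrec (j+2),
          show (j+2)+1 = j+3 from by omega]
      have := Pt_Qc j
      exact Pt_mul (Pt_DD j).2 (Pt_mul (Pt_DD j).2 (Pt_mul (Pt_Bm j) (Pt_mul (Pt_Bm j) this)))
lemma Pt_Qa : ∀ j : ℕ, Pt (Qa (j+2))
  | 0 => by
      rw [Qa_eq 2]
      exact Pt_mul Pt_A2 Pt_B2
  | (j+1) => by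
      show Pt (Qa (j+3))
      rw [show (j+3) = (j+2)+1 from by omega, Qarec (j+2)]
      exact Pt_mul (Pt_Dm j) (Pt_mul (Pt_Qa j) (Pt_Bm j))
lemma Pt_Qx : ∀ j : ℕ, Pt (Qx (j+2))
  | 0 => by
      rw [Qx_eq 2]
      exact Pt_mul (Pt_mul Pt_D2 Pt_X2) Pt_B2
  | (j+1) => by
      show Pt (Qx (j+3))
      rw [show (j+3) = (j+2)+1 from by omega, Qxrec (j+2)]
      exact Pt_mul (Pt_Dm j) (Pt_mul (Pt_Qx j) (Pt_Bm j))
lemma Pt_Qt (j : ℕ) : Pt (Qt (j+2)) := by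
  rw [Qt_eq]
  exact Pt_mul (Pt_DD j).2 (Pt_Bm j)

-- ===== memberships in Px =====

lemma Px_A2 : Px (Am 2) := KX_a
lemma Px_B2 : Px (Bm 2) := KX_b
lemma Px_C2 : Px (Cm 2) := KX_c
lemma Px_X2 : Px (Xm 2) := KX_x
lemma Px_D3 : Px (Dm 3) := by have h := KX_u; rwa [ShI2_Dm1] at h
lemma Px_D2 : Px (Dm 2) := Px_inv (BmDm 2) (DmBm 2) Px_B2
lemma Px_DD : ∀ j : ℕ, Px (Dm (j+2)) ∧ Px (Dm (j+3))
  | 0 => ⟨Px_D2, Px_D3⟩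
  | (j+1) => by
      obtain ⟨h1, h2⟩ := Px_DD j
      refine ⟨h2, ?_⟩
      have hb : Px (Bm (j+2)) := Px_inv (DmBm (j+2)) (BmDm (j+2)) h1
      show Px (Dm (j+4))
      rw [show (j+4) = (j+2)+2 from by omega, Drec (j+2),
          show (j+2)+1 = j+3 from by omega]
      exact Px_mul h1 (Px_mul h2 (Px_mul hb (Px_mul hb h2)))
lemma Px_Dm (j : ℕ) : Px (Dm (j+2)) := (Px_DD j).1
lemma Px_Bm (j : ℕ) : Px (Bm (j+2)) := Px_inv (DmBm (j+2)) (BmDm (j+2)) (Px_Dm j)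
lemma Px_Qc : ∀ j : ℕ, Px (Qc (j+2))
  | 0 => by
      rw [Qc_eq 2]
      exact Px_mul Px_D2 Px_C2
  | (j+1) => by
      show Px (Qc (j+3))
      rw [show (j+3) = (j+2)+1 from by omega, Qcrec (j+2),
          show (j+2)+1 = j+3 from by omega]
      have := Px_Qc j
      exact Px_mul (Px_DD j).2 (Px_mul (Px_DD j).2 (Px_mul (Px_Bm j) (Px_mul (Px_Bm j) this)))
lemma Px_Qa : ∀ j : ℕ, Px (Qa (j+2))
  | 0 => by
      rw [Qa_eq 2]
      exact Px_mul Px_A2 Px_B2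
  | (j+1) => by
      show Px (Qa (j+3))
      rw [show (j+3) = (j+2)+1 from by omega, Qarec (j+2)]
      exact Px_mul (Px_Dm j) (Px_mul (Px_Qa j) (Px_Bm j))
lemma Px_Qx : ∀ j : ℕ, Px (Qx (j+2))
  | 0 => by
      rw [Qx_eq 2]
      exact Px_mul (Px_mul Px_D2 Px_X2) Px_B2
  | (j+1) => by
      show Px (Qx (j+3))
      rw [show (j+3) = (j+2)+1 from by omega, Qxrec (j+2)]
      exact Px_mul (Px_Dm j) (Px_mul (Px_Qx j) (Px_Bm j))
lemma Px_Qt (j : ℕ) : Px (Qt (j+2)) := by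
  rw [Qt_eq]
  exact Px_mul (Px_DD j).2 (Px_Bm j)

end SKP

namespace SKP

-- the family Qtv (inverse of Qt)
noncomputable def Qtv (j : ℕ) : M := ShI j (D0 * Bm 1)

lemma Qtv0_eq : Qtv 0 = D0 * Bm 1 := by simp [Qtv]

lemma QtQtv (j : ℕ) : Qt j * Qtv j = 1 := by
  rw [Qt, Qtv, ← map_mul]
  have e : (Sh D0 * B0) * (D0 * Bm 1) = 1 := by
    rw [Bm_one']
    calc (Sh D0 * B0) * (D0 * Sh B0) = Sh D0 * (B0 * (D0 * Sh B0)) := by rw [mul_assoc]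
    _ = Sh D0 * Sh B0 := by rw [bd0']
    _ = 1 := by rw [← map_mul, db0, map_one]
  rw [e, map_one]

lemma QtvQt (j : ℕ) : Qtv j * Qt j = 1 := by
  rw [Qt, Qtv, ← map_mul]
  have e : (D0 * Bm 1) * (Sh D0 * B0) = 1 := by
    rw [Bm_one']
    calc (D0 * Sh B0) * (Sh D0 * B0) = D0 * ((Sh B0 * Sh D0) * B0) := by simp [mul_assoc]
    _ = D0 * (1 * B0) := by rw [← map_mul, bd0, map_one]
    _ = 1 := by rw [one_mul, db0]
  rw [e, map_one]

lemma Ptv_of_Pt {g : M} (h : Pt g) : Qtv 0 * g = g * Qtv 0 :=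
  (comm_inv (QtQtv 0) (QtvQt 0) h.symm).symm

-- iterate-2 conversions
lemma ShI_two (g : M) : ShI 2 g = Sh (Sh g) := rfl

lemma ShSh_Qc (n : ℕ) : Sh (Sh (Qc n)) = Qc (n+2) := by
  rw [← ShI_two]; simpa [Nat.add_comm] using ShI_Qc 2 n
lemma ShSh_Qa (n : ℕ) : Sh (Sh (Qa n)) = Qa (n+2) := by
  rw [← ShI_two]; simpa [Nat.add_comm] using ShI_Qa 2 n
lemma ShSh_Qt (n : ℕ) : Sh (Sh (Qt n)) = Qt (n+2) := by
  rw [← ShI_two]; simpa [Nat.add_comm] using ShI_Qt 2 n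
lemma ShSh_Qx (n : ℕ) : Sh (Sh (Qx n)) = Qx (n+2) := by
  rw [← ShI_two]; simpa [Nat.add_comm] using ShI_Qx 2 n

-- power-cancellation helpers
lemma pc1 (i j : ℕ) (g : M) : β^i * (δ^(i+j) * g) = δ^j * g := by
  rw [← mul_assoc, beta_pow_delta_pow]
lemma pc2 (i j : ℕ) (g : M) : β^(i+j) * (δ^i * g) = β^j * g := by
  rw [← mul_assoc, beta_pow_delta_pow']
lemma pm1 (i j : ℕ) (g : M) : δ^i * (δ^j * g) = δ^(i+j) * g := by
  rw [← mul_assoc, ← pow_add]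

-- push lemmas for the acting families
lemma Qc0_pushd (n : ℕ) (g : M) : Qc 0 * (δ^n * g) = δ^n * (Qc n * g) := by
  rw [← mul_assoc, delta_pow_shift, ShI_Qc, Nat.add_zero, mul_assoc]
lemma Qa0_pushd (n : ℕ) (g : M) : Qa 0 * (δ^n * g) = δ^n * (Qa n * g) := by
  rw [← mul_assoc, delta_pow_shift, ShI_Qa, Nat.add_zero, mul_assoc]
lemma Qt0_pushd (n : ℕ) (g : M) : Qt 0 * (δ^n * g) = δ^n * (Qt n * g) := by
  rw [← mul_assoc, delta_pow_shift, ShI_Qt, Nat.add_zero, mul_assoc]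
lemma Qx0_pushd (n : ℕ) (g : M) : Qx 0 * (δ^n * g) = δ^n * (Qx n * g) := by
  rw [← mul_assoc, delta_pow_shift, ShI_Qx, Nat.add_zero, mul_assoc]

lemma Qc_pullb (n : ℕ) : Qc n * β^n = β^n * Qc 0 := by
  have h := beta_pow_shift n (Qc 0); rw [ShI_Qc, Nat.add_zero] at h; exact h.symm
lemma Qa_pullb (n : ℕ) : Qa n * β^n = β^n * Qa 0 := by
  have h := beta_pow_shift n (Qa 0); rw [ShI_Qa, Nat.add_zero] at h; exact h.symm
lemma Qt_pullb (n : ℕ) : Qt n * β^n = β^n * Qt 0 := by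
  have h := beta_pow_shift n (Qt 0); rw [ShI_Qt, Nat.add_zero] at h; exact h.symm
lemma Qx_pullb (n : ℕ) : Qx n * β^n = β^n * Qx 0 := by
  have h := beta_pow_shift n (Qx 0); rw [ShI_Qx, Nat.add_zero] at h; exact h.symm

/-- master assembly lemma -/
lemma asmM (A B m p q : ℕ) (Z0 Zp Zq T0 : M)
    (hd : ∀ g : M, Z0 * (δ^(m+p) * g) = δ^(m+p) * (Zp * g))
    (hb : Zq * β^(m+q) = β^(m+q) * Z0)
    (key : Zp * T0 = T0 * Zq) :
    (δ^A * (Z0 * β^B)) * (δ^(B+(m+p)) * (T0 * β^(B+(m+q))))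
    = (δ^(A+(m+p)) * (T0 * β^(A+(m+q)))) * (δ^A * (Z0 * β^B)) := by
  have keyf : ∀ g : M, Zp * (T0 * g) = T0 * (Zq * g) := fun g => by
    rw [← mul_assoc, key, mul_assoc]
  have hR : (δ^(A+(m+p)) * (T0 * β^(A+(m+q)))) * (δ^A * (Z0 * β^B))
      = δ^(A+(m+p)) * (T0 * (β^(m+q) * (Z0 * β^B))) := by
    calc (δ^(A+(m+p)) * (T0 * β^(A+(m+q)))) * (δ^A * (Z0 * β^B))
        = δ^(A+(m+p)) * (T0 * (β^(A+(m+q)) * (δ^A * (Z0 * β^B)))) := by simp [mul_assoc]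
    _ = δ^(A+(m+p)) * (T0 * (β^(m+q) * (Z0 * β^B))) := by rw [pc2]
  have hL : (δ^A * (Z0 * β^B)) * (δ^(B+(m+p)) * (T0 * β^(B+(m+q))))
      = δ^(A+(m+p)) * (T0 * (β^(m+q) * (Z0 * β^B))) := by
    calc (δ^A * (Z0 * β^B)) * (δ^(B+(m+p)) * (T0 * β^(B+(m+q))))
        = δ^A * (Z0 * (β^B * (δ^(B+(m+p)) * (T0 * β^(B+(m+q)))))) := by simp [mul_assoc]
    _ = δ^A * (Z0 * (δ^(m+p) * (T0 * β^(B+(m+q))))) := by rw [pc1]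
    _ = δ^A * (δ^(m+p) * (Zp * (T0 * β^(B+(m+q))))) := by rw [hd]
    _ = δ^(A+(m+p)) * (Zp * (T0 * β^(B+(m+q)))) := by rw [pm1]
    _ = δ^(A+(m+p)) * (T0 * (Zq * β^(B+(m+q)))) := by rw [keyf]
    _ = δ^(A+(m+p)) * (T0 * (Zq * (β^(m+q) * β^B))) := by
          rw [show B+(m+q) = (m+q)+B from by omega, pow_add β (m+q) B]
    _ = δ^(A+(m+p)) * (T0 * ((Zq * β^(m+q)) * β^B)) := by rw [mul_assoc]
    _ = δ^(A+(m+p)) * (T0 * ((β^(m+q) * Z0) * β^B)) := by rw [hb]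
    _ = δ^(A+(m+p)) * (T0 * (β^(m+q) * (Z0 * β^B))) := by rw [mul_assoc]
  rw [hL, hR]

lemma asmQc (A B m p q e1 e2 e3 e4 : ℕ) (T0 : M)
    (h1 : e1 = B+(m+p)) (h2 : e2 = B+(m+q)) (h3 : e3 = A+(m+p)) (h4 : e4 = A+(m+q))
    (key : Qc (m+p) * T0 = T0 * Qc (m+q)) :
    (δ^A * (Qc 0 * β^B)) * (δ^e1 * (T0 * β^e2))
    = (δ^e3 * (T0 * β^e4)) * (δ^A * (Qc 0 * β^B)) := by
  subst h1; subst h2; subst h3; subst h4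
  exact asmM A B m p q (Qc 0) (Qc (m+p)) (Qc (m+q)) T0
    (fun g => Qc0_pushd (m+p) g) (Qc_pullb (m+q)) key

lemma asmQa (A B m p q e1 e2 e3 e4 : ℕ) (T0 : M)
    (h1 : e1 = B+(m+p)) (h2 : e2 = B+(m+q)) (h3 : e3 = A+(m+p)) (h4 : e4 = A+(m+q))
    (key : Qa (m+p) * T0 = T0 * Qa (m+q)) :
    (δ^A * (Qa 0 * β^B)) * (δ^e1 * (T0 * β^e2))
    = (δ^e3 * (T0 * β^e4)) * (δ^A * (Qa 0 * β^B)) := by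
  subst h1; subst h2; subst h3; subst h4
  exact asmM A B m p q (Qa 0) (Qa (m+p)) (Qa (m+q)) T0
    (fun g => Qa0_pushd (m+p) g) (Qa_pullb (m+q)) key

lemma asmQt (A B m p q e1 e2 e3 e4 : ℕ) (T0 : M)
    (h1 : e1 = B+(m+p)) (h2 : e2 = B+(m+q)) (h3 : e3 = A+(m+p)) (h4 : e4 = A+(m+q))
    (key : Qt (m+p) * T0 = T0 * Qt (m+q)) :
    (δ^A * (Qt 0 * β^B)) * (δ^e1 * (T0 * β^e2))
    = (δ^e3 * (T0 * β^e4)) * (δ^A * (Qt 0 * β^B)) := by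
  subst h1; subst h2; subst h3; subst h4
  exact asmM A B m p q (Qt 0) (Qt (m+p)) (Qt (m+q)) T0
    (fun g => Qt0_pushd (m+p) g) (Qt_pullb (m+q)) key

lemma asmQx (A B m p q e1 e2 e3 e4 : ℕ) (T0 : M)
    (h1 : e1 = B+(m+p)) (h2 : e2 = B+(m+q)) (h3 : e3 = A+(m+p)) (h4 : e4 = A+(m+q))
    (key : Qx (m+p) * T0 = T0 * Qx (m+q)) :
    (δ^A * (Qx 0 * β^B)) * (δ^e1 * (T0 * β^e2))
    = (δ^e3 * (T0 * β^e4)) * (δ^A * (Qx 0 * β^B)) := by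
  subst h1; subst h2; subst h3; subst h4
  exact asmM A B m p q (Qx 0) (Qx (m+p)) (Qx (m+q)) T0
    (fun g => Qx0_pushd (m+p) g) (Qx_pullb (m+q)) key

-- tower lemmas
lemma TXi (n : ℕ) : π (Xi (n+1)) = δ^(n+2) * (Qc 0 * β^n) := by
  rw [Xi]
  simp only [map_mul, map_pow, Nat.add_sub_cancel, d2d, b2d]
  rw [L_c2, Qc0_eq, pow_succ δ (n+1)]
  simp [mul_assoc]

lemma TEta (n : ℕ) : π (Eta (n+1)) = δ^n * (Qa 0 * β^(n+2)) := by
  rw [Eta]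
  simp only [map_mul, map_pow, Nat.add_sub_cancel, d2d, b2d]
  rw [L_a2, Qa0_eq, pow_succ' β (n+1)]
  simp [mul_assoc]

lemma TSig (n : ℕ) : π (Sig (n+1)) = δ^(n+2) * (Qt 0 * β^(n+2)) := by
  rw [Sig]
  simp only [map_mul, map_pow, Nat.add_sub_cancel, d2d, b2d]
  rw [L_b1, L_d1, Qt0_eq, Dm_one, pow_succ δ (n+1), pow_succ' β (n+1)]
  simp [mul_assoc]
  rw [← mul_assoc, ← pow_succ]

lemma TSigInv (n : ℕ) : π (SigInv (n+1)) = δ^(n+2) * (Qtv 0 * β^(n+2)) := by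
  rw [SigInv]
  simp only [map_mul, map_pow, Nat.add_sub_cancel, d2d, b2d]
  rw [L_b1, L_d1, Qtv0_eq, Bm_one, pow_succ δ (n+1), pow_succ' β (n+1)]
  simp [mul_assoc]
  rw [pow_succ' β n]

lemma TTau (n : ℕ) : π (Tau (n+1)) = δ^(n+2) * (Qx 0 * β^(n+2)) := by
  rw [Tau]
  simp only [map_mul, map_pow, Nat.add_sub_cancel, d2d, b2d]
  rw [L_x2, L_x1, show Qx 0 = Dm 1 * (X0 * Bm 1) from Qx0_eq.trans Rx,
      Dm_one, Bm_one, pow_succ δ (n+1), pow_succ' β (n+1)]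
  simp [mul_assoc]

/-- the main statement, abstracted over the receiving family -/
lemma main4 (W : ℕ → Word) (T0 : M) (p q : ℕ)
    (tower : ∀ n, π (W (n+1)) = δ^(n+p) * (T0 * β^(n+q)))
    (keyC : ∀ m, Qc (m+p) * T0 = T0 * Qc (m+q))
    (keyA : ∀ m, Qa (m+p) * T0 = T0 * Qa (m+q))
    (keyT : ∀ m, Qt (m+p) * T0 = T0 * Qt (m+q))
    (keyX : ∀ m, Qx (m+p) * T0 = T0 * Qx (m+q)) :
    ∀ k l : ℕ, 1 ≤ k → 1 ≤ l →
      (k ≤ l → skCon (Xi k * W l) (W (l+2) * Xi k)) ∧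
      (k + 2 ≤ l → skCon (Eta k * W l) (W (l-2) * Eta k)) ∧
      (k + 2 ≤ l → skCon (Sig k * W l) (W l * Sig k)) ∧
      (k + 2 ≤ l → skCon (Tau k * W l) (W l * Tau k)) := by
  intro k l hk hl
  obtain ⟨k', rfl⟩ : ∃ k', k = k'+1 := ⟨k-1, by omega⟩
  obtain ⟨l', rfl⟩ : ∃ l', l = l'+1 := ⟨l-1, by omega⟩
  refine ⟨?_, ?_, ?_, ?_⟩
  · intro hkl
    obtain ⟨m, rfl⟩ : ∃ m, l' = k'+m := ⟨l'-k', by omega⟩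
    refine (skCon.eq).mp ?_
    show π _ = π _
    rw [map_mul, map_mul, show k'+m+1+2 = ((k'+m)+2)+1 from by omega,
        TXi k', tower (k'+m), tower ((k'+m)+2)]
    exact asmQc (k'+2) k' m p q _ _ _ _ T0 (by omega) (by omega) (by omega) (by omega)
      (keyC m)
  · intro hkl
    obtain ⟨m, rfl⟩ : ∃ m, l' = (k'+m)+2 := ⟨l'-k'-2, by omega⟩
    refine (skCon.eq).mp ?_
    show π _ = π _
    rw [map_mul, map_mul, show (k'+m)+2+1-2 = (k'+m)+1 from by omega,
        TEta k', tower ((k'+m)+2), tower (k'+m)]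
    exact asmQa k' (k'+2) m p q _ _ _ _ T0 (by omega) (by omega) (by omega) (by omega)
      (keyA m)
  · intro hkl
    obtain ⟨m, rfl⟩ : ∃ m, l' = (k'+m)+2 := ⟨l'-k'-2, by omega⟩
    refine (skCon.eq).mp ?_
    show π _ = π _
    rw [map_mul, map_mul, TSig k', tower ((k'+m)+2)]
    exact asmQt (k'+2) (k'+2) m p q _ _ _ _ T0 (by omega) (by omega) (by omega) (by omega)
      (keyT m)
  · intro hkl
    obtain ⟨m, rfl⟩ : ∃ m, l' = (k'+m)+2 := ⟨l'-k'-2, by omega⟩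
    refine (skCon.eq).mp ?_
    show π _ = π _
    rw [map_mul, map_mul, TTau k', tower ((k'+m)+2)]
    exact asmQx (k'+2) (k'+2) m p q _ _ _ _ T0 (by omega) (by omega) (by omega) (by omega)
      (keyX m)

end SKP

namespace SKP

lemma keyC_Xi (m : ℕ) : Qc (m+2) * Qc 0 = Qc 0 * Qc (m+0) := by
  rw [Nat.add_zero, ← ShSh_Qc m]; exact Eq.symm (Pc_Qc m)
lemma keyA_Xi (m : ℕ) : Qa (m+2) * Qc 0 = Qc 0 * Qa (m+0) := by
  rw [Nat.add_zero, ← ShSh_Qa m]; exact Eq.symm (Pc_Qa m)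
lemma keyT_Xi (m : ℕ) : Qt (m+2) * Qc 0 = Qc 0 * Qt (m+0) := by
  rw [Nat.add_zero, ← ShSh_Qt m]; exact Eq.symm (Pc_Qt m)
lemma keyX_Xi (m : ℕ) : Qx (m+2) * Qc 0 = Qc 0 * Qx (m+0) := by
  rw [Nat.add_zero, ← ShSh_Qx m]; exact Eq.symm (Pc_Qx m)

lemma keyC_Eta (m : ℕ) : Qc (m+0) * Qa 0 = Qa 0 * Qc (m+2) := by
  rw [Nat.add_zero, ← ShSh_Qc m]; exact Eq.symm (Pa_Qc m)
lemma keyA_Eta (m : ℕ) : Qa (m+0) * Qa 0 = Qa 0 * Qa (m+2) := by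
  rw [Nat.add_zero, ← ShSh_Qa m]; exact Eq.symm (Pa_Qa m)
lemma keyT_Eta (m : ℕ) : Qt (m+0) * Qa 0 = Qa 0 * Qt (m+2) := by
  rw [Nat.add_zero, ← ShSh_Qt m]; exact Eq.symm (Pa_Qt m)
lemma keyX_Eta (m : ℕ) : Qx (m+0) * Qa 0 = Qa 0 * Qx (m+2) := by
  rw [Nat.add_zero, ← ShSh_Qx m]; exact Eq.symm (Pa_Qx m)

lemma keyC_Sig (m : ℕ) : Qc (m+2) * Qt 0 = Qt 0 * Qc (m+2) := Eq.symm (Pt_Qc m)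
lemma keyA_Sig (m : ℕ) : Qa (m+2) * Qt 0 = Qt 0 * Qa (m+2) := Eq.symm (Pt_Qa m)
lemma keyT_Sig (m : ℕ) : Qt (m+2) * Qt 0 = Qt 0 * Qt (m+2) := Eq.symm (Pt_Qt m)
lemma keyX_Sig (m : ℕ) : Qx (m+2) * Qt 0 = Qt 0 * Qx (m+2) := Eq.symm (Pt_Qx m)

lemma keyC_SigInv (m : ℕ) : Qc (m+2) * Qtv 0 = Qtv 0 * Qc (m+2) :=
  Eq.symm (Ptv_of_Pt (Pt_Qc m))
lemma keyA_SigInv (m : ℕ) : Qa (m+2) * Qtv 0 = Qtv 0 * Qa (m+2) :=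
  Eq.symm (Ptv_of_Pt (Pt_Qa m))
lemma keyT_SigInv (m : ℕ) : Qt (m+2) * Qtv 0 = Qtv 0 * Qt (m+2) :=
  Eq.symm (Ptv_of_Pt (Pt_Qt m))
lemma keyX_SigInv (m : ℕ) : Qx (m+2) * Qtv 0 = Qtv 0 * Qx (m+2) :=
  Eq.symm (Ptv_of_Pt (Pt_Qx m))

lemma keyC_Tau (m : ℕ) : Qc (m+2) * Qx 0 = Qx 0 * Qc (m+2) := Eq.symm (Px_Qc m)
lemma keyA_Tau (m : ℕ) : Qa (m+2) * Qx 0 = Qx 0 * Qa (m+2) := Eq.symm (Px_Qa m)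
lemma keyT_Tau (m : ℕ) : Qt (m+2) * Qx 0 = Qx 0 * Qt (m+2) := Eq.symm (Px_Qt m)
lemma keyX_Tau (m : ℕ) : Qx (m+2) * Qx 0 = Qx 0 * Qx (m+2) := Eq.symm (Px_Qx m)

end SKP

/-- Relations φ(11)-φ(14) hold in SK, where U ranges over the five families
Xi, Eta, Sig, SigInv, Tau. -/
theorem phi_11_14 :
    ∀ U : ℕ → Word, U ∈ ({Xi, Eta, Sig, SigInv, Tau} : Set (ℕ → Word)) →
    ∀ k l : ℕ, 1 ≤ k → 1 ≤ l →
      (k ≤ l → skCon (Xi k * U l) (U (l+2) * Xi k)) ∧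
      (k + 2 ≤ l → skCon (Eta k * U l) (U (l-2) * Eta k)) ∧
      (k + 2 ≤ l → skCon (Sig k * U l) (U l * Sig k)) ∧
      (k + 2 ≤ l → skCon (Tau k * U l) (U l * Tau k)) := by
  intro U hU
  simp only [Set.mem_insert_iff, Set.mem_singleton_iff] at hU
  rcases hU with rfl | rfl | rfl | rfl | rfl
  · exact SKP.main4 Xi (SKP.Qc 0) 2 0 (fun n => by simpa using SKP.TXi n)
      SKP.keyC_Xi SKP.keyA_Xi SKP.keyT_Xi SKP.keyX_Xi
  · exact SKP.main4 Eta (SKP.Qa 0) 0 2 (fun n => by simpa using SKP.TEta n)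
      SKP.keyC_Eta SKP.keyA_Eta SKP.keyT_Eta SKP.keyX_Eta
  · exact SKP.main4 Sig (SKP.Qt 0) 2 2 SKP.TSig
      SKP.keyC_Sig SKP.keyA_Sig SKP.keyT_Sig SKP.keyX_Sig
  · exact SKP.main4 SigInv (SKP.Qtv 0) 2 2 SKP.TSigInv
      SKP.keyC_SigInv SKP.keyA_SigInv SKP.keyT_SigInv SKP.keyX_SigInv
  · exact SKP.main4 Tau (SKP.Qx 0) 2 2 SKP.TTau
      SKP.keyC_Tau SKP.keyA_Tau SKP.keyT_Tau SKP.keyX_Tau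
end
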